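/- arXiv:1606.02795 — 2 statements merged into one kernel-verified Lean document; each statement's English description precedes it below -/
import Mathlib

section
/- Suppose Y_n is a sequence of D-valued random elements such that for every (j,k) ∈ ℤ_+^2, (n ν[n,∞))^{-j} (n ν(−∞,−n])^{-k} P(Y_n ∈ ·) → C_{j,k}(·) in M(D ∖ D_{<j,k}). Then, for any measurable A ⊆ D for which the argmin defining (J(A),K(A)) is non-empty and A is bounded away from D_{<J(A),K(A)}, one has C_{J(A),K(A)}(A°) ≤ liminf_{n→∞} P(Y_n ∈ A)/[(n ν[n,∞))^{J(A)} (n ν(−∞,−n])^{K(A)}] and limsup_{n→∞} P(Y_n ∈ A)/[(n ν[n,∞))^{J(A)} (n ν(−∞,−n])^{K(A)}] ≤ C_{J(A),K(A)}(Ā). Moreover, if the argmin is empty and A is bounded away from D_{<l,m} ∪ D_{l,m} for some (l,m) ∈ ℤ_+^2 ∖ {(0,0)}, then P(Y_n ∈ A)/[(n ν[n,∞))^l (n ν(−∞,−n])^m] → 0. -/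
open MeasureTheory Filter Topology Set ProbabilityTheory
open scoped ENNReal NNReal Classical

noncomputable section

/-- `A` is bounded away from `B` (for a distance function `ρ`). -/
def BddAway {S : Type*} (ρ : S → S → ℝ) (A B : Set S) : Prop :=
  ∃ ε > 0, ∀ a ∈ A, ∀ b ∈ B, ε ≤ ρ a b

/-- `M(S∖C)`-convergence of a sequence of measures: convergence of the integrals of every
bounded nonnegative continuous function vanishing on an `r`-neighborhood of `C` for some
`r > 0`. -/
def MConv {S : Type*} [TopologicalSpace S] [MeasurableSpace S] (ρ : S → S → ℝ) (C : Set S)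
    (μ : ℕ → Measure S) (μlim : Measure S) : Prop :=
  ∀ f : S → ℝ, Continuous f → (∃ M, ∀ x, |f x| ≤ M) → (∀ x, 0 ≤ f x) →
    (∃ r > 0, ∀ x, (∃ y ∈ C, ρ y x < r) → f x = 0) →
    Filter.Tendsto (fun n => ∫⁻ x, ENNReal.ofReal (f x) ∂(μ n)) Filter.atTop
      (nhds (∫⁻ x, ENNReal.ofReal (f x) ∂μlim))

/-- Membership in the class `M(S∖C)`: a Borel measure giving no mass to `C`, whose
restriction to the complement of each `r`-neighborhood of `C` is finite. -/
def MemM {S : Type*} [MeasurableSpace S] (ρ : S → S → ℝ) (C : Set S) (μ : Measure S) : Prop :=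
  μ C = 0 ∧ ∀ r : ℝ, 0 < r → μ {x | ¬ ∃ y ∈ C, ρ y x < r} < ⊤

/-- `Y n` is asymptotically equivalent to `X n` with respect to the sequence `eps`. -/
def AsympEquiv {Ω S : Type*} [MeasurableSpace Ω] (P : Measure Ω) (ρ : S → S → ℝ)
    (X Y : ℕ → Ω → S) (eps : ℕ → ℝ) : Prop :=
  ∀ δ : ℝ, 0 < δ →
    Filter.limsup (fun n => (ENNReal.ofReal (eps n))⁻¹ * P {ω | δ ≤ ρ (X n ω) (Y n ω)})
      Filter.atTop = 0

/-- A function `g` is regularly varying at infinity with index `ρ`. -/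
def RegVarying (g : ℝ → ℝ) (ρ : ℝ) : Prop :=
  (∀ᶠ s in Filter.atTop, 0 < g s) ∧
  ∀ c : ℝ, 0 < c →
    Filter.Tendsto (fun s => g (c * s) / g s) Filter.atTop (nhds (c ^ ρ))

/-- The Pareto-type measure `ν_γ` on `(0,∞)` with `ν_γ(x,∞) = x^{-γ}`. -/
def nuPareto (γ : ℝ) : Measure ℝ :=
  (volume.restrict (Set.Ioi (0 : ℝ))).withDensity fun s => ENNReal.ofReal (γ * s ^ (-γ - 1))

/-- The ordered cone `{x : x 0 ≥ x 1 ≥ … }`. -/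
def ordCone (j : ℕ) : Set (Fin j → ℝ) := {x | ∀ i i' : Fin j, i ≤ i' → x i' ≤ x i}

/-- `ν_γ^j`: the `j`-fold product of `ν_γ` restricted to the ordered cone. -/
def nuPow (γ : ℝ) (j : ℕ) : Measure (Fin j → ℝ) :=
  (Measure.pi fun _ => nuPareto γ).restrict (ordCone j)

/-- The joint law of `j` i.i.d. uniform random variables on `[0,1]`. -/
def unifPow (j : ℕ) : Measure (Fin j → ℝ) :=
  Measure.pi fun _ => volume.restrict (Set.Icc (0 : ℝ) 1)

/-- Right-continuity together with existence of left limits, for a function on `[0,1]`. -/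
def IsCadlag (f : unitInterval → ℝ) : Prop :=
  (∀ t : unitInterval, Filter.Tendsto f (nhdsWithin t (Set.Ici t)) (nhds (f t))) ∧
  (∀ t : unitInterval, ∃ L : ℝ, Filter.Tendsto f (nhdsWithin t (Set.Iio t)) (nhds L))

/-- The Skorokhod space `D = D([0,1], ℝ)` of real-valued càdlàg functions on `[0,1]`. -/
structure D where
  toFun : unitInterval → ℝ
  cadlag : IsCadlag toFun

/-- The set of increasing homeomorphisms of `[0,1]` onto itself
(continuous strictly increasing bijections of `[0,1]`). -/
def TimeChanges : Set (unitInterval → unitInterval) :=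
  {l | Continuous l ∧ StrictMono l ∧ Function.Bijective l}

/-- The Skorokhod `J₁` distance on `D`:
`d(x,y) = inf_{λ ∈ Λ} (‖λ - id‖_∞ ⊔ ‖x ∘ λ - y‖_∞)`. -/
def dJ1 (x y : D) : ℝ :=
  sInf ((fun l : unitInterval → unitInterval =>
      max (⨆ t : unitInterval, |(l t : ℝ) - (t : ℝ)|)
          (⨆ t : unitInterval, |x.toFun (l t) - y.toFun t|)) '' TimeChanges)

/-- The Skorokhod `J₁` topology on `D`: the topology generated by the open `dJ1`-balls. -/
instance : TopologicalSpace D :=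
  TopologicalSpace.generateFrom {U : Set D | ∃ x ε, U = {y | dJ1 x y < ε}}

instance : MeasurableSpace D := borel D

/-- The step path `t ↦ ∑ i, x i · 1_{[u i, 1]}(t)`. -/
def stepPath {j : ℕ} (x u : Fin j → ℝ) : unitInterval → ℝ :=
  fun t => ∑ i, if u i ≤ (t : ℝ) then x i else 0

lemma step_right (c u : ℝ) (t : unitInterval) :
    Filter.Tendsto (fun s : unitInterval => if u ≤ (s : ℝ) then c else 0)
      (nhdsWithin t (Set.Ici t)) (nhds (if u ≤ (t : ℝ) then c else 0)) := by
  by_cases h : u ≤ (t : ℝ)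
  · rw [if_pos h]
    apply Filter.Tendsto.congr' _ tendsto_const_nhds
    filter_upwards [self_mem_nhdsWithin] with s hs
    rw [if_pos (le_trans h hs)]
  · rw [if_neg h]
    apply Filter.Tendsto.congr' _ tendsto_const_nhds
    have hV : IsOpen {s : unitInterval | (s : ℝ) < u} :=
      continuous_subtype_val.isOpen_preimage _ isOpen_Iio
    have ht : t ∈ {s : unitInterval | (s : ℝ) < u} := not_le.mp h
    filter_upwards [mem_nhdsWithin_of_mem_nhds (hV.mem_nhds ht)] with s hs
    rw [if_neg (not_le.mpr hs)]

lemma step_left (c u : ℝ) (t : unitInterval) :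
    Filter.Tendsto (fun s : unitInterval => if u ≤ (s : ℝ) then c else 0)
      (nhdsWithin t (Set.Iio t)) (nhds (if u < (t : ℝ) then c else 0)) := by
  by_cases h : u < (t : ℝ)
  · rw [if_pos h]
    apply Filter.Tendsto.congr' _ tendsto_const_nhds
    have hV : IsOpen {s : unitInterval | u < (s : ℝ)} :=
      continuous_subtype_val.isOpen_preimage _ isOpen_Ioi
    filter_upwards [mem_nhdsWithin_of_mem_nhds (hV.mem_nhds h)] with s hs
    rw [if_pos (le_of_lt hs)]
  · rw [if_neg h]
    apply Filter.Tendsto.congr' _ tendsto_const_nhds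
    filter_upwards [self_mem_nhdsWithin] with s hs
    have : (s : ℝ) < (t : ℝ) := hs
    rw [if_neg (not_le.mpr (lt_of_lt_of_le this (not_lt.mp h)))]

lemma isCadlag_stepPath {j : ℕ} (x u : Fin j → ℝ) : IsCadlag (stepPath x u) := by
  constructor
  · intro t
    have := tendsto_finset_sum (Finset.univ)
      (fun i (_ : i ∈ Finset.univ) => step_right (x i) (u i) t)
    exact this
  · intro t
    refine ⟨∑ i, if u i < (t : ℝ) then x i else 0, ?_⟩
    have := tendsto_finset_sum (Finset.univ)
      (fun i (_ : i ∈ Finset.univ) => step_left (x i) (u i) t)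
    exact this

/-- The element of `D` determined by jump sizes `x` and jump times `u`. -/
def stepD {j : ℕ} (x u : Fin j → ℝ) : D := ⟨stepPath x u, isCadlag_stepPath x u⟩

/-- `D_j`: nondecreasing step functions vanishing at the origin with exactly `j` jumps. -/
def Dstep (j : ℕ) : Set D :=
  {ξ | ∃ x u : Fin j → ℝ, (∀ i, 0 < x i) ∧ (∀ i, 0 < u i ∧ u i ≤ 1) ∧
    Function.Injective u ∧ ξ = stepD x u}

/-- `D_{<j} = ⋃_{0 ≤ l < j} D_l`. -/
def DstepLT (j : ℕ) : Set D := {ξ | ∃ l, l < j ∧ ξ ∈ Dstep l}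

/-- `D_{≤j} = ⋃_{0 ≤ l ≤ j} D_l`. -/
def DstepLE (j : ℕ) : Set D := {ξ | ∃ l, l ≤ j ∧ ξ ∈ Dstep l}

/-- The two-sided step path `t ↦ ∑ i, x i 1_{[u i,1]}(t) - ∑ i, y i 1_{[v i,1]}(t)`. -/
def stepPath2 {j k : ℕ} (x u : Fin j → ℝ) (y v : Fin k → ℝ) : unitInterval → ℝ :=
  fun t => stepPath x u t - stepPath y v t

lemma isCadlag_stepPath2 {j k : ℕ} (x u : Fin j → ℝ) (y v : Fin k → ℝ) :
    IsCadlag (stepPath2 x u y v) := by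
  obtain ⟨h1, h2⟩ := isCadlag_stepPath x u
  obtain ⟨h1', h2'⟩ := isCadlag_stepPath y v
  constructor
  · intro t; exact (h1 t).sub (h1' t)
  · intro t
    obtain ⟨L, hL⟩ := h2 t
    obtain ⟨L', hL'⟩ := h2' t
    exact ⟨L - L', hL.sub hL'⟩

/-- The element of `D` with upward jumps `x` at times `u` and downward jumps `y`
at times `v`. -/
def stepD2 {j k : ℕ} (x u : Fin j → ℝ) (y v : Fin k → ℝ) : D :=
  ⟨stepPath2 x u y v, isCadlag_stepPath2 x u y v⟩

/-- `D_{j,k}`: step functions vanishing at the origin with exactly `j` upward jumps and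
`k` downward jumps. -/
def Dstep2 (j k : ℕ) : Set D :=
  {ξ | ∃ (x u : Fin j → ℝ) (y v : Fin k → ℝ),
    (∀ i, 0 < x i) ∧ (∀ i, 0 < y i) ∧
    (∀ i, 0 < u i ∧ u i ≤ 1) ∧ (∀ i, 0 < v i ∧ v i ≤ 1) ∧
    Function.Injective u ∧ Function.Injective v ∧ (∀ i i', u i ≠ v i') ∧
    ξ = stepD2 x u y v}

/-- `D_{<j,k} = ⋃_{(l,m) ∈ I_{<j,k}} D_{l,m}` (for tail indices `α`, `β`). -/
def Dlt2 (α β : ℝ) (j k : ℕ) : Set D :=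
  {ξ | ∃ l m : ℕ, (l, m) ≠ (j, k) ∧
    (α - 1) * l + (β - 1) * m ≤ (α - 1) * j + (β - 1) * k ∧ ξ ∈ Dstep2 l m}

/-- The limit measure `C_j = E[ν_α^j {x : ∑ i x i 1_{[U i,1]} ∈ ·}]` on `D`
(equal to the Dirac mass at the zero path when `j = 0`). -/
def Cmeas (γ : ℝ) (j : ℕ) : Measure D :=
  Measure.map (fun p : (Fin j → ℝ) × (Fin j → ℝ) => stepD p.1 p.2)
    ((nuPow γ j).prod (unifPow j))

/-- The limit measure
`C_{j,k} = E[ν_α^j × ν_β^k {(x,y) : ∑ i x i 1_{[U i,1]} - ∑ i y i 1_{[V i,1]} ∈ ·}]` on `D`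
(equal to the Dirac mass at the zero path when `(j,k) = (0,0)`). -/
def Cmeas2 (α β : ℝ) (j k : ℕ) : Measure D :=
  Measure.map (fun p : ((Fin j → ℝ) × (Fin j → ℝ)) × ((Fin k → ℝ) × (Fin k → ℝ)) =>
      stepD2 p.1.1 p.1.2 p.2.1 p.2.2)
    (((nuPow α j).prod (unifPow j)).prod ((nuPow β k).prod (unifPow k)))

lemma isCadlag_const (c : ℝ) : IsCadlag (fun _ => c) :=
  ⟨fun _ => tendsto_const_nhds, fun _ => ⟨c, tendsto_const_nhds⟩⟩

/-- Build an element of `D` from a function (with a junk default for non-càdlàg input). -/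
def mkD (f : unitInterval → ℝ) : D :=
  if h : IsCadlag f then ⟨f, h⟩ else ⟨fun _ => 0, isCadlag_const 0⟩

/-- `A_δ = {x : d(x, A) ≤ δ}` in `D`. -/
def thickenD (δ : ℝ) (A : Set D) : Set D := {x | ∀ ε > 0, ∃ a ∈ A, dJ1 a x < δ + ε}

/-- The normalizing constant `(n ν[n,∞))^j (n ν(-∞,-n])^k`, as an element of `ℝ≥0∞`. -/
def norm2 (ν : Measure ℝ) (n j k : ℕ) : ℝ≥0∞ :=
  ENNReal.ofReal ((((n : ℝ) * (ν (Set.Ici (n : ℝ))).toReal) ^ j) *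
    (((n : ℝ) * (ν (Set.Iic (-(n : ℝ)))).toReal) ^ k))

/-! ### Auxiliary development: metric properties of `dJ1` -/

instance : BorelSpace D := ⟨rfl⟩

lemma D_bdd (x : D) : ∃ M : ℝ, 0 ≤ M ∧ ∀ t, |x.toFun t| ≤ M := by
  obtain ⟨hr, hl⟩ := x.cadlag
  have key : ∀ t : unitInterval, ∃ M : ℝ, {s | |x.toFun s| ≤ M} ∈ 𝓝 t := by
    intro t
    obtain ⟨L, hL⟩ := hl t
    refine ⟨max (|x.toFun t| + 1) (|L| + 1), ?_⟩
    have h1 : {s | |x.toFun s| ≤ max (|x.toFun t| + 1) (|L| + 1)} ∈ 𝓝[Set.Ici t] t := by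
      have hev : ∀ᶠ s in 𝓝[Set.Ici t] t, x.toFun s ∈ Metric.ball (x.toFun t) 1 :=
        (hr t) (Metric.ball_mem_nhds _ one_pos)
      filter_upwards [hev] with s hs
      have h2 : |x.toFun s - x.toFun t| < 1 := by simpa [Real.dist_eq] using hs
      have h3 := abs_sub_abs_le_abs_sub (x.toFun s) (x.toFun t)
      exact le_max_iff.2 (Or.inl (by linarith))
    have h2 : {s | |x.toFun s| ≤ max (|x.toFun t| + 1) (|L| + 1)} ∈ 𝓝[Set.Iio t] t := by
      have hev : ∀ᶠ s in 𝓝[Set.Iio t] t, x.toFun s ∈ Metric.ball L 1 :=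
        hL (Metric.ball_mem_nhds _ one_pos)
      filter_upwards [hev] with s hs
      have h2 : |x.toFun s - L| < 1 := by simpa [Real.dist_eq] using hs
      have h3 := abs_sub_abs_le_abs_sub (x.toFun s) L
      exact le_max_iff.2 (Or.inr (by linarith))
    have hsup : 𝓝[Set.Ici t] t ⊔ 𝓝[Set.Iio t] t = 𝓝 t := by
      rw [← nhdsWithin_union,
        show Set.Ici t ∪ Set.Iio t = Set.univ from by
          rw [Set.union_comm]; exact Set.Iio_union_Ici, nhdsWithin_univ]
    rw [← hsup]
    exact Filter.mem_sup.2 ⟨h1, h2⟩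
  choose M hM using key
  obtain ⟨T, hT⟩ := isCompact_univ.elim_nhds_subcover (fun t => {s | |x.toFun s| ≤ M t})
      (fun t _ => hM t)
  have hTne : T.Nonempty := by
    rcases Finset.eq_empty_or_nonempty T with h | h
    · exfalso
      have := hT.2 (Set.mem_univ (0 : unitInterval))
      simp [h] at this
    · exact h
  refine ⟨max 0 (T.sup' hTne M), le_max_left _ _, fun t => ?_⟩
  have := hT.2 (Set.mem_univ t)
  simp only [Set.mem_iUnion] at this
  obtain ⟨c, hc, hct⟩ := this
  exact le_trans hct (le_trans (Finset.le_sup' M hc) (le_max_right _ _))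

lemma id_mem_timeChanges : (id : unitInterval → unitInterval) ∈ TimeChanges :=
  ⟨continuous_id, strictMono_id, Function.bijective_id⟩

lemma timeChanges_nonempty : TimeChanges.Nonempty := ⟨id, id_mem_timeChanges⟩

lemma comp_mem_timeChanges {l₁ l₂ : unitInterval → unitInterval}
    (h₁ : l₁ ∈ TimeChanges) (h₂ : l₂ ∈ TimeChanges) : l₁ ∘ l₂ ∈ TimeChanges :=
  ⟨h₁.1.comp h₂.1, h₁.2.1.comp h₂.2.1, h₁.2.2.comp h₂.2.2⟩

/-- The functional appearing in the definition of `dJ1`. -/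
def J1F (x y : D) : (unitInterval → unitInterval) → ℝ := fun l =>
  max (⨆ t : unitInterval, |(l t : ℝ) - (t : ℝ)|)
      (⨆ t : unitInterval, |x.toFun (l t) - y.toFun t|)

lemma dJ1_eq (x y : D) : dJ1 x y = sInf (J1F x y '' TimeChanges) := rfl

lemma bdd1 (l : unitInterval → unitInterval) :
    BddAbove (Set.range fun t : unitInterval => |(l t : ℝ) - (t : ℝ)|) := by
  refine ⟨1, ?_⟩
  rintro _ ⟨t, rfl⟩
  have h1 := (l t).2.1; have h2 := (l t).2.2
  have h3 := t.2.1; have h4 := t.2.2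
  rw [abs_le]; constructor <;> linarith

lemma bdd2 (x y : D) (l : unitInterval → unitInterval) :
    BddAbove (Set.range fun t : unitInterval => |x.toFun (l t) - y.toFun t|) := by
  obtain ⟨Mx, _, hMx⟩ := D_bdd x
  obtain ⟨My, _, hMy⟩ := D_bdd y
  refine ⟨Mx + My, ?_⟩
  rintro _ ⟨t, rfl⟩
  calc |x.toFun (l t) - y.toFun t| ≤ |x.toFun (l t)| + |y.toFun t| := abs_sub _ _
    _ ≤ Mx + My := add_le_add (hMx _) (hMy _)

lemma J1F_nonneg (x y : D) (l : unitInterval → unitInterval) : 0 ≤ J1F x y l :=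
  le_max_of_le_left (Real.iSup_nonneg fun _ => abs_nonneg _)

lemma dJ1_bddBelow (x y : D) : BddBelow (J1F x y '' TimeChanges) := by
  refine ⟨0, ?_⟩
  rintro _ ⟨l, _, rfl⟩
  exact J1F_nonneg x y l

lemma dJ1_nonneg (x y : D) : 0 ≤ dJ1 x y := by
  rw [dJ1_eq]
  exact le_csInf (timeChanges_nonempty.image _) (by rintro _ ⟨l, _, rfl⟩; exact J1F_nonneg x y l)

lemma J1F_id (x y : D) : J1F x y id = ⨆ t : unitInterval, |x.toFun t - y.toFun t| := by
  have h1 : (fun t : unitInterval => |((id t : unitInterval) : ℝ) - (t : ℝ)|) = fun _ => 0 := by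
    funext t; simp
  rw [J1F, h1, ciSup_const]
  exact max_eq_right (Real.iSup_nonneg fun _ => abs_nonneg _)

lemma dJ1_le_sup (x y : D) : dJ1 x y ≤ ⨆ t : unitInterval, |x.toFun t - y.toFun t| := by
  rw [dJ1_eq, ← J1F_id x y]
  exact csInf_le (dJ1_bddBelow x y) (Set.mem_image_of_mem _ id_mem_timeChanges)

lemma dJ1_self (x : D) : dJ1 x x = 0 := by
  refine le_antisymm ?_ (dJ1_nonneg x x)
  refine le_trans (dJ1_le_sup x x) ?_
  have : (fun t : unitInterval => |x.toFun t - x.toFun t|) = fun _ => 0 := by funext t; simp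
  rw [this, ciSup_const]

lemma sup_comp_surj {f : unitInterval → ℝ} {l : unitInterval → unitInterval}
    (hl : Function.Surjective l) : (⨆ t, f (l t)) = ⨆ t, f t := by
  rw [iSup, iSup, ← hl.range_comp f]; rfl

/-- The inverse of a time change is a time change. -/
lemma inv_timeChange {l : unitInterval → unitInterval} (hl : l ∈ TimeChanges) :
    ∃ l' ∈ TimeChanges, (∀ t, l (l' t) = t) ∧ (∀ t, l' (l t) = t) := by
  obtain ⟨hc, hm, hb⟩ := hl
  let e : unitInterval ≃ unitInterval := Equiv.ofBijective l hb
  have hce : Continuous e := hc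
  let h : unitInterval ≃ₜ unitInterval := Continuous.homeoOfEquivCompactToT2 (f := e) hce
  refine ⟨e.symm, ⟨h.symm.continuous, ?_, e.symm.bijective⟩, fun t => e.apply_symm_apply t,
    fun t => e.symm_apply_apply t⟩
  intro a b hab
  have : l (e.symm a) < l (e.symm b) := by
    rwa [show l (e.symm a) = a from e.apply_symm_apply a,
      show l (e.symm b) = b from e.apply_symm_apply b]
  exact (hm.lt_iff_lt).1 this

lemma J1F_symm {x y : D} {l l' : unitInterval → unitInterval} (hl : l ∈ TimeChanges)
    (h1 : ∀ t, l (l' t) = t) (h2 : ∀ t, l' (l t) = t) : J1F y x l' = J1F x y l := by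
  have hsurj : Function.Surjective l := hl.2.2.2
  have e1 : (⨆ t : unitInterval, |(l' t : ℝ) - (t : ℝ)|)
      = ⨆ t : unitInterval, |(l t : ℝ) - (t : ℝ)| := by
    rw [← sup_comp_surj (f := fun t : unitInterval => |(l' t : ℝ) - (t : ℝ)|) hsurj]
    congr 1; funext s; rw [h2 s, abs_sub_comm]
  have e2 : (⨆ t : unitInterval, |y.toFun (l' t) - x.toFun t|)
      = ⨆ t : unitInterval, |x.toFun (l t) - y.toFun t| := by
    rw [← sup_comp_surj (f := fun t : unitInterval => |y.toFun (l' t) - x.toFun t|) hsurj]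
    congr 1; funext s; rw [h2 s, abs_sub_comm]
  rw [J1F, J1F, e1, e2]

lemma dJ1_symm (x y : D) : dJ1 x y = dJ1 y x := by
  rw [dJ1_eq, dJ1_eq]
  congr 1
  apply Set.Subset.antisymm
  · rintro _ ⟨l, hl, rfl⟩
    obtain ⟨l', hl', h1, h2⟩ := inv_timeChange hl
    exact ⟨l', hl', J1F_symm hl h1 h2⟩
  · rintro _ ⟨l, hl, rfl⟩
    obtain ⟨l', hl', h1, h2⟩ := inv_timeChange hl
    exact ⟨l', hl', J1F_symm (x := y) (y := x) hl h1 h2⟩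

lemma J1F_comp_le (x y z : D) {l₁ l₂ : unitInterval → unitInterval}
    (h₁ : l₁ ∈ TimeChanges) (h₂ : l₂ ∈ TimeChanges) :
    J1F x z (l₁ ∘ l₂) ≤ J1F x y l₁ + J1F y z l₂ := by
  apply max_le
  · apply ciSup_le
    intro t
    calc |((l₁ (l₂ t) : unitInterval) : ℝ) - (t : ℝ)|
        ≤ |((l₁ (l₂ t) : unitInterval) : ℝ) - ((l₂ t : unitInterval) : ℝ)|
          + |((l₂ t : unitInterval) : ℝ) - (t : ℝ)| := abs_sub_le _ _ _
      _ ≤ (⨆ s : unitInterval, |(l₁ s : ℝ) - (s : ℝ)|)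
          + ⨆ s : unitInterval, |(l₂ s : ℝ) - (s : ℝ)| :=
          add_le_add (le_ciSup (bdd1 l₁) (l₂ t)) (le_ciSup (bdd1 l₂) t)
      _ ≤ J1F x y l₁ + J1F y z l₂ := add_le_add (le_max_left _ _) (le_max_left _ _)
  · apply ciSup_le
    intro t
    calc |x.toFun (l₁ (l₂ t)) - z.toFun t|
        ≤ |x.toFun (l₁ (l₂ t)) - y.toFun (l₂ t)| + |y.toFun (l₂ t) - z.toFun t| :=
          abs_sub_le _ _ _
      _ ≤ (⨆ s : unitInterval, |x.toFun (l₁ s) - y.toFun s|)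
          + ⨆ s : unitInterval, |y.toFun (l₂ s) - z.toFun s| :=
          add_le_add (le_ciSup (bdd2 x y l₁) (l₂ t)) (le_ciSup (bdd2 y z l₂) t)
      _ ≤ J1F x y l₁ + J1F y z l₂ := add_le_add (le_max_right _ _) (le_max_right _ _)

lemma dJ1_triangle (x y z : D) : dJ1 x z ≤ dJ1 x y + dJ1 y z := by
  have key : ∀ ε : ℝ, 0 < ε → dJ1 x z ≤ dJ1 x y + dJ1 y z + (ε + ε) := by
    intro ε hε
    obtain ⟨v₁, hv₁, hlt₁⟩ := exists_lt_of_csInf_lt (timeChanges_nonempty.image _)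
      (show sInf (J1F x y '' TimeChanges) < dJ1 x y + ε from
        (dJ1_eq x y) ▸ lt_add_of_pos_right _ hε)
    obtain ⟨l₁, hl₁, rfl⟩ := hv₁
    obtain ⟨v₂, hv₂, hlt₂⟩ := exists_lt_of_csInf_lt (timeChanges_nonempty.image _)
      (show sInf (J1F y z '' TimeChanges) < dJ1 y z + ε from
        (dJ1_eq y z) ▸ lt_add_of_pos_right _ hε)
    obtain ⟨l₂, hl₂, rfl⟩ := hv₂
    calc dJ1 x z ≤ J1F x z (l₁ ∘ l₂) := by
          rw [dJ1_eq]
          exact csInf_le (dJ1_bddBelow x z)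
            (Set.mem_image_of_mem _ (comp_mem_timeChanges hl₁ hl₂))
      _ ≤ J1F x y l₁ + J1F y z l₂ := J1F_comp_le x y z hl₁ hl₂
      _ ≤ dJ1 x y + dJ1 y z + (ε + ε) := by linarith
  by_contra hcon
  push_neg at hcon
  have h4 := key ((dJ1 x z - (dJ1 x y + dJ1 y z)) / 4) (by linarith)
  linarith

/-! ### Topology of `D` -/

lemma isOpen_ball (c : D) (ε : ℝ) : IsOpen {y | dJ1 c y < ε} :=
  TopologicalSpace.isOpen_generateFrom_of_mem ⟨c, ε, rfl⟩

lemma exists_ball_subset {U : Set D} (hU : IsOpen U) {x : D} (hx : x ∈ U) :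
    ∃ δ > 0, ∀ y, dJ1 x y < δ → y ∈ U := by
  have hgen : TopologicalSpace.GenerateOpen {U : Set D | ∃ x ε, U = {y | dJ1 x y < ε}} U := hU
  clear hU
  induction hgen with
  | basic V hV =>
    obtain ⟨c, ε, rfl⟩ := hV
    refine ⟨ε - dJ1 c x, by simpa using hx, fun y hy => ?_⟩
    have := dJ1_triangle c x y
    simp only [Set.mem_setOf_eq] at hx ⊢
    linarith
  | univ => exact ⟨1, one_pos, fun _ _ => trivial⟩
  | inter V W _ _ ihV ihW =>
    obtain ⟨δ₁, hδ₁, hb₁⟩ := ihV hx.1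
    obtain ⟨δ₂, hδ₂, hb₂⟩ := ihW hx.2
    exact ⟨min δ₁ δ₂, lt_min hδ₁ hδ₂, fun y hy =>
      ⟨hb₁ y (hy.trans_le (min_le_left _ _)), hb₂ y (hy.trans_le (min_le_right _ _))⟩⟩
  | sUnion S hS ih =>
    obtain ⟨V, hVS, hxV⟩ := hx
    obtain ⟨δ, hδ, hb⟩ := ih V hVS hxV
    exact ⟨δ, hδ, fun y hy => ⟨V, hVS, hb y hy⟩⟩

/-! ### Distance to a set (capped at 1) -/

/-- Capped distance from `x` to the set `A` (from the left argument of `dJ1`). -/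
def dSet (A : Set D) (x : D) : ℝ := sInf (insert 1 ((fun a => dJ1 a x) '' A))

lemma dSet_bddBelow (A : Set D) (x : D) :
    BddBelow (insert 1 ((fun a => dJ1 a x) '' A)) := by
  refine ⟨0, ?_⟩
  rintro b hb
  rcases Set.mem_insert_iff.1 hb with rfl | ⟨a, _, rfl⟩
  · exact zero_le_one
  · exact dJ1_nonneg _ _

lemma dSet_nonneg (A : Set D) (x : D) : 0 ≤ dSet A x :=
  le_csInf ⟨1, Set.mem_insert _ _⟩ fun b hb => by
    rcases Set.mem_insert_iff.1 hb with rfl | ⟨a, _, rfl⟩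
    · exact zero_le_one
    · exact dJ1_nonneg _ _

lemma dSet_le_one (A : Set D) (x : D) : dSet A x ≤ 1 :=
  csInf_le (dSet_bddBelow A x) (Set.mem_insert _ _)

lemma dSet_le_dJ1 {A : Set D} {a : D} (ha : a ∈ A) (x : D) : dSet A x ≤ dJ1 a x :=
  csInf_le (dSet_bddBelow A x) (Set.mem_insert_of_mem _ ⟨a, ha, rfl⟩)

lemma dSet_eq_zero_of_mem {A : Set D} {x : D} (hx : x ∈ A) : dSet A x = 0 :=
  le_antisymm (by simpa [dJ1_self] using dSet_le_dJ1 hx x) (dSet_nonneg A x)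

lemma dSet_lt_elim {A : Set D} {x : D} {c : ℝ} (h : dSet A x < c) (hc : c ≤ 1) :
    ∃ a ∈ A, dJ1 a x < c := by
  obtain ⟨b, hb, hbc⟩ := exists_lt_of_csInf_lt ⟨1, Set.mem_insert _ _⟩ h
  rcases Set.mem_insert_iff.1 hb with rfl | ⟨a, ha, rfl⟩
  · exact absurd (hbc.trans_le hc) (lt_irrefl 1)
  · exact ⟨a, ha, hbc⟩

lemma le_dSet {A : Set D} {x : D} {c : ℝ} (h : ∀ a ∈ A, c ≤ dJ1 a x) (hc : c ≤ 1) :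
    c ≤ dSet A x :=
  le_csInf ⟨1, Set.mem_insert _ _⟩ fun b hb => by
    rcases Set.mem_insert_iff.1 hb with rfl | ⟨a, ha, rfl⟩
    · exact hc
    · exact h a ha

lemma dSet_le_add (A : Set D) (x y : D) : dSet A x ≤ dSet A y + dJ1 y x := by
  have h : dSet A x - dJ1 y x ≤ dSet A y := by
    apply le_csInf ⟨1, Set.mem_insert _ _⟩
    intro b hb
    rcases Set.mem_insert_iff.1 hb with rfl | ⟨a, ha, rfl⟩
    · have h1 := dSet_le_one A x
      have h2 := dJ1_nonneg y x
      linarith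
    · have h1 : dSet A x ≤ dJ1 a x := dSet_le_dJ1 ha x
      have h2 : dJ1 a x ≤ dJ1 a y + dJ1 y x := dJ1_triangle a y x
      linarith
  linarith

lemma continuous_dSet (A : Set D) : Continuous (dSet A) := by
  rw [continuous_iff_continuousAt]
  intro x
  rw [ContinuousAt, Metric.tendsto_nhds]
  intro ε hε
  have hball : {y | dJ1 x y < ε} ∈ 𝓝 x :=
    (isOpen_ball x ε).mem_nhds (by show dJ1 x x < ε; rw [dJ1_self]; exact hε)
  filter_upwards [hball] with y hy
  replace hy : dJ1 x y < ε := hy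
  rw [Real.dist_eq, abs_sub_lt_iff]
  have h1 := dSet_le_add A y x
  have h2 := dSet_le_add A x y
  have h3 : dJ1 y x = dJ1 x y := dJ1_symm y x
  constructor <;> linarith

lemma mem_closure_of_dSet {A : Set D} {x : D} (h : dSet A x = 0) : x ∈ closure A := by
  rw [mem_closure_iff]
  intro U hU hxU
  obtain ⟨δ, hδ, hball⟩ := exists_ball_subset hU hxU
  have hlt : dSet A x < min δ 1 := by rw [h]; exact lt_min hδ one_pos
  obtain ⟨a, ha, halt⟩ := dSet_lt_elim hlt (min_le_right _ _)
  exact ⟨a, hball a (by rw [dJ1_symm]; exact halt.trans_le (min_le_left _ _)), ha⟩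

lemma dSet_pos_of_mem_open {G : Set D} {x : D} (hG : IsOpen G) (hx : x ∈ G) :
    0 < dSet Gᶜ x := by
  obtain ⟨δ, hδ, hball⟩ := exists_ball_subset hG hx
  have : min δ 1 ≤ dSet Gᶜ x := by
    apply le_dSet _ (min_le_right _ _)
    intro a ha
    by_contra hcon
    push_neg at hcon
    exact ha (hball a (by rw [dJ1_symm]; exact hcon.trans_le (min_le_left _ _)))
  exact lt_of_lt_of_le (lt_min hδ one_pos) this

/-! ### Measure-theoretic auxiliaries -/

lemma nuPareto_Iic_zero (γ : ℝ) : nuPareto γ (Set.Iic 0) = 0 := by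
  rw [nuPareto, withDensity_apply _ measurableSet_Iic,
    Measure.restrict_restrict measurableSet_Iic]
  have h : Set.Iic (0 : ℝ) ∩ Set.Ioi 0 = ∅ := by
    ext s; simp only [Set.mem_inter_iff, Set.mem_Iic, Set.mem_Ioi, Set.mem_empty_iff_false,
      iff_false, not_and_or, not_lt]
    rcases le_or_gt s 0 with h | h
    · exact Or.inr h
    · exact Or.inl (not_le.2 h)
  rw [h, Measure.restrict_empty, lintegral_zero_measure]

lemma nuPareto_Ici_lt_top {γ : ℝ} (hγ : 1 < γ) {c : ℝ} (hc : 0 < c) :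
    nuPareto γ (Set.Ici c) < ⊤ := by
  rw [nuPareto, withDensity_apply _ measurableSet_Ici,
    Measure.restrict_restrict measurableSet_Ici]
  have h : Set.Ici c ∩ Set.Ioi 0 = Set.Ici c := by
    apply Set.inter_eq_self_of_subset_left
    intro s hs
    exact lt_of_lt_of_le hc hs
  rw [h]
  have hint : IntegrableOn (fun s : ℝ => γ * s ^ (-γ - 1)) (Set.Ici c) := by
    rw [integrableOn_Ici_iff_integrableOn_Ioi]
    exact (integrableOn_Ioi_rpow_of_lt (by linarith) hc).const_mul γ
  exact hint.lintegral_lt_top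

lemma sigmaFinite_nuPareto {γ : ℝ} (hγ : 1 < γ) : SigmaFinite (nuPareto γ) := by
  refine ⟨⟨⟨fun n => Set.Iic 0 ∪ Set.Ici (1 / (n + 1)), fun _ => trivial, fun n => ?_, ?_⟩⟩⟩
  · refine lt_of_le_of_lt (measure_union_le _ _) ?_
    rw [nuPareto_Iic_zero, zero_add]
    exact nuPareto_Ici_lt_top hγ (by positivity)
  · apply Set.eq_univ_iff_forall.2
    intro s
    rcases le_or_gt s 0 with hs | hs
    · exact Set.mem_iUnion.2 ⟨0, Or.inl hs⟩
    · obtain ⟨n, hn⟩ := exists_nat_one_div_lt hs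
      exact Set.mem_iUnion.2 ⟨n, Or.inr (le_of_lt hn)⟩

instance : IsProbabilityMeasure (volume.restrict (Set.Icc (0:ℝ) 1)) :=
  ⟨by rw [Measure.restrict_apply_univ]; simp [Real.volume_Icc]⟩

instance unifPow_prob (j : ℕ) : IsProbabilityMeasure (unifPow j) := by
  unfold unifPow; infer_instance

lemma measurable_ordCone (j : ℕ) : MeasurableSet (ordCone j) := by
  have h : ordCone j = ⋂ (i : Fin j), ⋂ (i' : Fin j), {x | i ≤ i' → x i' ≤ x i} := by
    ext x; simp [ordCone]
  rw [h]
  apply MeasurableSet.iInter; intro i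
  apply MeasurableSet.iInter; intro i'
  by_cases h' : i ≤ i'
  · have : {x : Fin j → ℝ | i ≤ i' → x i' ≤ x i} = {x | x i' ≤ x i} := by
      ext x; simp [h']
    rw [this]
    exact measurableSet_le (measurable_pi_apply i') (measurable_pi_apply i)
  · have : {x : Fin j → ℝ | i ≤ i' → x i' ≤ x i} = Set.univ := by
      ext x; simp [h']
    rw [this]; exact MeasurableSet.univ

lemma prod_fst_null {X Y : Type*} [MeasurableSpace X] [MeasurableSpace Y]
    (μ : Measure X) (ν : Measure Y) [SFinite μ] [SFinite ν] {S : Set X} (hS : μ S = 0) :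
    (μ.prod ν) {p | p.1 ∈ S} = 0 := by
  have h : {p : X × Y | p.1 ∈ S} = S ×ˢ Set.univ := by ext p; simp
  rw [h, Measure.prod_prod, hS, zero_mul]

lemma prod_snd_null {X Y : Type*} [MeasurableSpace X] [MeasurableSpace Y]
    (μ : Measure X) (ν : Measure Y) [SFinite μ] [SFinite ν] {S : Set Y} (hS : ν S = 0) :
    (μ.prod ν) {p | p.2 ∈ S} = 0 := by
  have h : {p : X × Y | p.2 ∈ S} = Set.univ ×ˢ S := by ext p; simp
  rw [h, Measure.prod_prod, hS, mul_zero]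

lemma unif_point_null {j : ℕ} (i : Fin j) (c : ℝ) : unifPow j {u | u i = c} = 0 := by
  have h0 : (volume.restrict (Set.Icc (0:ℝ) 1)) ({c} : Set ℝ) = 0 := by
    rw [Measure.restrict_apply (measurableSet_singleton c)]
    exact measure_mono_null Set.inter_subset_left (Real.volume_singleton)
  exact Measure.pi_eval_preimage_null
    (μ := fun _ : Fin j => volume.restrict (Set.Icc (0:ℝ) 1)) (i := i) h0

lemma unif_diag_null {j : ℕ} {i i' : Fin j} (h : i ≠ i') :
    unifPow j {u | u i = u i'} = 0 := by
  classical
  set p : Fin j → Prop := fun k => k = i with hp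
  have hup : ¬ p i' := fun hc => h hc.symm
  set e := MeasurableEquiv.piEquivPiSubtypeProd (fun _ : Fin j => ℝ) p with he
  have mp := measurePreserving_piEquivPiSubtypeProd
    (fun _ : Fin j => volume.restrict (Set.Icc (0:ℝ) 1)) p
  set E : Set (({k // p k} → ℝ) × ({k // ¬ p k} → ℝ)) :=
    {q | q.1 ⟨i, rfl⟩ = q.2 ⟨i', hup⟩} with hE
  have hEm : MeasurableSet E := by
    apply measurableSet_eq_fun
    · exact (measurable_pi_apply (⟨i, rfl⟩ : {k // p k})).comp measurable_fst
    · exact (measurable_pi_apply (⟨i', hup⟩ : {k // ¬ p k})).comp measurable_snd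
  have hpre : {u : Fin j → ℝ | u i = u i'} = e ⁻¹' E := rfl
  rw [show unifPow j = Measure.pi (fun _ : Fin j => volume.restrict (Set.Icc (0:ℝ) 1)) from rfl,
    hpre, mp.measure_preimage hEm.nullMeasurableSet]
  rw [Measure.measure_prod_null hEm]
  apply ae_of_all
  intro a
  show (Measure.pi fun _ : {k // ¬ p k} => volume.restrict (Set.Icc (0:ℝ) 1))
      (Prod.mk a ⁻¹' E) = 0
  have hsec : Prod.mk a ⁻¹' E
      = Function.eval (⟨i', hup⟩ : {k // ¬ p k}) ⁻¹' ({a ⟨i, rfl⟩} : Set ℝ) := by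
    ext b; exact ⟨fun h => h.symm, fun h => h.symm⟩
  rw [hsec]
  apply Measure.pi_eval_preimage_null
  rw [Measure.restrict_apply (measurableSet_singleton _)]
  exact measure_mono_null Set.inter_subset_left (Real.volume_singleton)

/-! ### The limit measure via generic configurations -/

/-- The underlying product measure defining `Cmeas2`. -/
def PiMeas (α β : ℝ) (j k : ℕ) :
    Measure (((Fin j → ℝ) × (Fin j → ℝ)) × ((Fin k → ℝ) × (Fin k → ℝ))) :=
  ((nuPow α j).prod (unifPow j)).prod ((nuPow β k).prod (unifPow k))

/-- The map defining `Cmeas2`. -/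
def Phi (j k : ℕ) : ((Fin j → ℝ) × (Fin j → ℝ)) × ((Fin k → ℝ) × (Fin k → ℝ)) → D :=
  fun p => stepD2 p.1.1 p.1.2 p.2.1 p.2.2

lemma Cmeas2_eq (α β : ℝ) (j k : ℕ) :
    Cmeas2 α β j k = Measure.map (Phi j k) (PiMeas α β j k) := rfl

/-- Generic configurations. -/
def Good (j k : ℕ) : Set (((Fin j → ℝ) × (Fin j → ℝ)) × ((Fin k → ℝ) × (Fin k → ℝ))) :=
  {p | (∀ i, 0 < p.1.1 i) ∧ (∀ i, 0 < p.2.1 i) ∧ (∀ i, 0 < p.1.2 i ∧ p.1.2 i ≤ 1) ∧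
    (∀ i, 0 < p.2.2 i ∧ p.2.2 i ≤ 1) ∧ Function.Injective p.1.2 ∧ Function.Injective p.2.2 ∧
    (∀ i i', p.1.2 i ≠ p.2.2 i') ∧ p.1.1 ∈ ordCone j ∧ p.2.1 ∈ ordCone k}

lemma good_mem_Dstep2 {j k : ℕ} {p} (hp : p ∈ Good j k) : Phi j k p ∈ Dstep2 j k :=
  ⟨p.1.1, p.1.2, p.2.1, p.2.2, hp.1, hp.2.1, hp.2.2.1, hp.2.2.2.1, hp.2.2.2.2.1,
    hp.2.2.2.2.2.1, hp.2.2.2.2.2.2.1, rfl⟩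

lemma nuPow_null {γ : ℝ} {j : ℕ} {S : Set (Fin j → ℝ)}
    (hS : (Measure.pi fun _ : Fin j => nuPareto γ) S = 0) : nuPow γ j S = 0 :=
  le_antisymm (le_trans (Measure.restrict_apply_le _ _) hS.le) zero_le

lemma nuPow_pos_ae {γ : ℝ} (hγ : 1 < γ) (j : ℕ) : nuPow γ j {x | ¬ ∀ i, 0 < x i} = 0 := by
  haveI := sigmaFinite_nuPareto hγ
  apply nuPow_null
  apply measure_mono_null (t := ⋃ i : Fin j, {x : Fin j → ℝ | x i ≤ 0})
  · intro x hx
    simp only [Set.mem_setOf_eq, not_forall, not_lt] at hx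
    obtain ⟨i, hi⟩ := hx
    exact Set.mem_iUnion.2 ⟨i, hi⟩
  · apply measure_iUnion_null
    intro i
    exact Measure.pi_eval_preimage_null (μ := fun _ : Fin j => nuPareto γ) (i := i)
      (s := Set.Iic 0) (nuPareto_Iic_zero γ)

lemma nuPow_cone_ae (γ : ℝ) (j : ℕ) : nuPow γ j (ordCone j)ᶜ = 0 := by
  rw [nuPow, Measure.restrict_apply (measurable_ordCone j).compl, Set.compl_inter_self,
    measure_empty]

lemma unif_times_ae (j : ℕ) : unifPow j {u | ¬ ∀ i, 0 < u i ∧ u i ≤ 1} = 0 := by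
  apply measure_mono_null
    (t := ⋃ i : Fin j, Function.eval i ⁻¹' ((Set.Ioc (0:ℝ) 1)ᶜ))
  · intro u hu
    simp only [Set.mem_setOf_eq, not_forall] at hu
    obtain ⟨i, hi⟩ := hu
    refine Set.mem_iUnion.2 ⟨i, ?_⟩
    simp only [Set.mem_preimage, Set.mem_compl_iff, Set.mem_Ioc]
    exact hi
  · apply measure_iUnion_null
    intro i
    apply Measure.pi_eval_preimage_null
      (μ := fun _ : Fin j => volume.restrict (Set.Icc (0:ℝ) 1)) (i := i)
    rw [Measure.restrict_apply measurableSet_Ioc.compl]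
    apply measure_mono_null (t := {(0:ℝ)}) _ Real.volume_singleton
    rintro s ⟨hs1, hs2⟩
    simp only [Set.mem_compl_iff, Set.mem_Ioc, not_and_or, not_le, not_lt] at hs1
    have h1 := hs2.1; have h2 := hs2.2
    rcases hs1 with h | h
    · exact Set.mem_singleton_iff.2 (le_antisymm h h1)
    · exact absurd h2 (not_le.2 h)

lemma unif_inj_ae (j : ℕ) : unifPow j {u | ¬ Function.Injective u} = 0 := by
  apply measure_mono_null
    (t := ⋃ i : Fin j, ⋃ i' : Fin j, {u : Fin j → ℝ | i ≠ i' ∧ u i = u i'})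
  · intro u hu
    simp only [Set.mem_setOf_eq, Function.Injective, not_forall] at hu
    obtain ⟨i, i', h1, h2⟩ := hu
    exact Set.mem_iUnion.2 ⟨i, Set.mem_iUnion.2 ⟨i', fun hc => h2 hc, h1⟩⟩
  · apply measure_iUnion_null; intro i
    apply measure_iUnion_null; intro i'
    by_cases h : i = i'
    · exact measure_mono_null (fun u hu => (hu.1 h).elim) measure_empty
    · exact measure_mono_null (fun u hu => hu.2) (unif_diag_null h)

lemma sigmaFinite_nuPow {γ : ℝ} (hγ : 1 < γ) (j : ℕ) : SigmaFinite (nuPow γ j) := by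
  haveI := sigmaFinite_nuPareto hγ
  unfold nuPow
  infer_instance

lemma good_ae {α β : ℝ} (hα : 1 < α) (hβ : 1 < β) (j k : ℕ) :
    ∀ᵐ p ∂(PiMeas α β j k), p ∈ Good j k := by
  haveI := sigmaFinite_nuPow hα j
  haveI := sigmaFinite_nuPow hβ k
  have h1 : ∀ᵐ p ∂(PiMeas α β j k), ∀ i, 0 < p.1.1 i :=
    ae_iff.2 (prod_fst_null _ _ (prod_fst_null _ _ (nuPow_pos_ae hα j)))
  have h2 : ∀ᵐ p ∂(PiMeas α β j k), ∀ i, 0 < p.2.1 i :=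
    ae_iff.2 (prod_snd_null _ _ (prod_fst_null _ _ (nuPow_pos_ae hβ k)))
  have h3 : ∀ᵐ p ∂(PiMeas α β j k), ∀ i, 0 < p.1.2 i ∧ p.1.2 i ≤ 1 :=
    ae_iff.2 (prod_fst_null _ _ (prod_snd_null _ _ (unif_times_ae j)))
  have h4 : ∀ᵐ p ∂(PiMeas α β j k), ∀ i, 0 < p.2.2 i ∧ p.2.2 i ≤ 1 :=
    ae_iff.2 (prod_snd_null _ _ (prod_snd_null _ _ (unif_times_ae k)))
  have h5 : ∀ᵐ p ∂(PiMeas α β j k), Function.Injective p.1.2 :=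
    ae_iff.2 (prod_fst_null _ _ (prod_snd_null _ _ (unif_inj_ae j)))
  have h6 : ∀ᵐ p ∂(PiMeas α β j k), Function.Injective p.2.2 :=
    ae_iff.2 (prod_snd_null _ _ (prod_snd_null _ _ (unif_inj_ae k)))
  have h8 : ∀ᵐ p ∂(PiMeas α β j k), p.1.1 ∈ ordCone j :=
    ae_iff.2 (prod_fst_null _ _ (prod_fst_null _ _ (nuPow_cone_ae α j)))
  have h9 : ∀ᵐ p ∂(PiMeas α β j k), p.2.1 ∈ ordCone k :=
    ae_iff.2 (prod_snd_null _ _ (prod_fst_null _ _ (nuPow_cone_ae β k)))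
  have h7 : ∀ᵐ p ∂(PiMeas α β j k), ∀ i i', p.1.2 i ≠ p.2.2 i' := by
    rw [ae_iff]
    apply measure_mono_null
      (t := ⋃ i : Fin j, ⋃ i' : Fin k,
        {p : ((Fin j → ℝ) × (Fin j → ℝ)) × ((Fin k → ℝ) × (Fin k → ℝ)) |
          p.1.2 i = p.2.2 i'})
    · intro p hp
      simp only [Set.mem_setOf_eq, not_forall, not_not] at hp
      obtain ⟨i, i', hii⟩ := hp
      exact Set.mem_iUnion.2 ⟨i, Set.mem_iUnion.2 ⟨i', hii⟩⟩
    · apply measure_iUnion_null; intro i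
      apply measure_iUnion_null; intro i'
      have hEm : MeasurableSet {p : ((Fin j → ℝ) × (Fin j → ℝ)) × ((Fin k → ℝ) × (Fin k → ℝ)) |
          p.1.2 i = p.2.2 i'} := by
        apply measurableSet_eq_fun
        · exact (measurable_pi_apply i).comp measurable_fst.snd
        · exact (measurable_pi_apply i').comp measurable_snd.snd
      show (((nuPow α j).prod (unifPow j)).prod ((nuPow β k).prod (unifPow k)))
        {p | p.1.2 i = p.2.2 i'} = 0
      rw [Measure.measure_prod_null hEm]
      apply ae_of_all
      intro q
      show ((nuPow β k).prod (unifPow k)) {r | q.2 i = r.2 i'} = 0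
      exact prod_snd_null _ _ (S := {v : Fin k → ℝ | q.2 i = v i'})
        (measure_mono_null (fun v hv => hv.symm) (unif_point_null i' (q.2 i)))
  filter_upwards [h1, h2, h3, h4, h5, h6, h7, h8, h9] with p g1 g2 g3 g4 g5 g6 g7 g8 g9
  exact ⟨g1, g2, g3, g4, g5, g6, g7, g8, g9⟩

lemma abs_ite_le {c u t : ℝ} (hc : 0 < c) : |(if u ≤ t then c else 0)| ≤ c := by
  split_ifs
  · rw [abs_of_pos hc]
  · rw [abs_zero]; exact hc.le

/-- Deleting the last upward jump of a generic configuration lands in `D_{j',k} ⊆ D_{<j'+1,k}`;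
this forces all upward jump sizes of configurations near `A` to be at least `ε - δ`. -/
lemma del_x_bound {α β : ℝ} (hα : 1 < α) {j' k : ℕ}
    {p : ((Fin (j'+1) → ℝ) × (Fin (j'+1) → ℝ)) × ((Fin k → ℝ) × (Fin k → ℝ))}
    (hp : p ∈ Good (j'+1) k) {A : Set D} {ε δ : ℝ}
    (hAway : ∀ a ∈ A, ∀ b ∈ Dlt2 α β (j'+1) k, ε ≤ dJ1 a b)
    {a : D} (ha : a ∈ A) (hlt : dJ1 a (Phi (j'+1) k p) < δ) :
    ε - δ ≤ p.1.1 (Fin.last j') := by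
  set i0 : Fin (j'+1) := Fin.last j' with hi0
  set q : D := stepD2 (p.1.1 ∘ Fin.castSucc) (p.1.2 ∘ Fin.castSucc) p.2.1 p.2.2 with hq
  have hqD : q ∈ Dstep2 j' k :=
    ⟨p.1.1 ∘ Fin.castSucc, p.1.2 ∘ Fin.castSucc, p.2.1, p.2.2,
      fun i => hp.1 _, hp.2.1, fun i => hp.2.2.1 _, hp.2.2.2.1,
      hp.2.2.2.2.1.comp (Fin.castSucc_injective _), hp.2.2.2.2.2.1,
      fun i i' => hp.2.2.2.2.2.2.1 _ i', rfl⟩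
  have hqlt : q ∈ Dlt2 α β (j'+1) k := by
    refine ⟨j', k, ?_, ?_, hqD⟩
    · simp
    · have h1 : (j' : ℝ) ≤ (j' : ℝ) + 1 := by linarith
      have h2 : (0:ℝ) ≤ α - 1 := by linarith
      push_cast
      nlinarith
  have hsup : dJ1 (Phi (j'+1) k p) q ≤ p.1.1 i0 := by
    refine le_trans (dJ1_le_sup _ _) (ciSup_le fun t => ?_)
    have hdiff : (Phi (j'+1) k p).toFun t - q.toFun t
        = (if p.1.2 i0 ≤ (t:ℝ) then p.1.1 i0 else 0) := by
      show stepPath2 p.1.1 p.1.2 p.2.1 p.2.2 t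
          - stepPath2 (p.1.1 ∘ Fin.castSucc) (p.1.2 ∘ Fin.castSucc) p.2.1 p.2.2 t = _
      rw [stepPath2, stepPath2]
      have hsum : stepPath p.1.1 p.1.2 t
          = stepPath (p.1.1 ∘ Fin.castSucc) (p.1.2 ∘ Fin.castSucc) t
            + (if p.1.2 i0 ≤ (t:ℝ) then p.1.1 i0 else 0) := by
        rw [stepPath, stepPath, Fin.sum_univ_castSucc
          (f := fun i : Fin (j'+1) => if p.1.2 i ≤ (t:ℝ) then p.1.1 i else 0)]
        rfl
      rw [hsum]; ring
    rw [hdiff]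
    exact abs_ite_le (hp.1 i0)
  have h1 : ε ≤ dJ1 a q := hAway a ha q hqlt
  have h2 : dJ1 a q ≤ dJ1 a (Phi (j'+1) k p) + dJ1 (Phi (j'+1) k p) q := dJ1_triangle _ _ _
  linarith

/-- Symmetric version for the downward jumps. -/
lemma del_y_bound {α β : ℝ} (hβ : 1 < β) {j k' : ℕ}
    {p : ((Fin j → ℝ) × (Fin j → ℝ)) × ((Fin (k'+1) → ℝ) × (Fin (k'+1) → ℝ))}
    (hp : p ∈ Good j (k'+1)) {A : Set D} {ε δ : ℝ}
    (hAway : ∀ a ∈ A, ∀ b ∈ Dlt2 α β j (k'+1), ε ≤ dJ1 a b)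
    {a : D} (ha : a ∈ A) (hlt : dJ1 a (Phi j (k'+1) p) < δ) :
    ε - δ ≤ p.2.1 (Fin.last k') := by
  set i0 : Fin (k'+1) := Fin.last k' with hi0
  set q : D := stepD2 p.1.1 p.1.2 (p.2.1 ∘ Fin.castSucc) (p.2.2 ∘ Fin.castSucc) with hq
  have hqD : q ∈ Dstep2 j k' :=
    ⟨p.1.1, p.1.2, p.2.1 ∘ Fin.castSucc, p.2.2 ∘ Fin.castSucc,
      hp.1, fun i => hp.2.1 _, hp.2.2.1, fun i => hp.2.2.2.1 _,
      hp.2.2.2.2.1, hp.2.2.2.2.2.1.comp (Fin.castSucc_injective _),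
      fun i i' => hp.2.2.2.2.2.2.1 i _, rfl⟩
  have hqlt : q ∈ Dlt2 α β j (k'+1) := by
    refine ⟨j, k', ?_, ?_, hqD⟩
    · simp
    · have h2 : (0:ℝ) ≤ β - 1 := by linarith
      push_cast
      nlinarith
  have hsup : dJ1 (Phi j (k'+1) p) q ≤ p.2.1 i0 := by
    refine le_trans (dJ1_le_sup _ _) (ciSup_le fun t => ?_)
    have hdiff : (Phi j (k'+1) p).toFun t - q.toFun t
        = -(if p.2.2 i0 ≤ (t:ℝ) then p.2.1 i0 else 0) := by
      show stepPath2 p.1.1 p.1.2 p.2.1 p.2.2 t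
          - stepPath2 p.1.1 p.1.2 (p.2.1 ∘ Fin.castSucc) (p.2.2 ∘ Fin.castSucc) t = _
      rw [stepPath2, stepPath2]
      have hsum : stepPath p.2.1 p.2.2 t
          = stepPath (p.2.1 ∘ Fin.castSucc) (p.2.2 ∘ Fin.castSucc) t
            + (if p.2.2 i0 ≤ (t:ℝ) then p.2.1 i0 else 0) := by
        rw [stepPath, stepPath, Fin.sum_univ_castSucc
          (f := fun i : Fin (k'+1) => if p.2.2 i ≤ (t:ℝ) then p.2.1 i else 0)]
        rfl
      rw [hsum]; ring
    rw [hdiff, abs_neg]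
    exact abs_ite_le (hp.2.1 i0)
  have h1 : ε ≤ dJ1 a q := hAway a ha q hqlt
  have h2 : dJ1 a q ≤ dJ1 a (Phi j (k'+1) p) + dJ1 (Phi j (k'+1) p) q := dJ1_triangle _ _ _
  linarith

/-- Finiteness of `∫ f dC_{j,k}` when `f` is supported `δ`-close to a set `A` bounded away
from `D_{<j,k}`. -/
lemma lint_fin {α β : ℝ} (hα : 1 < α) (hβ : 1 < β) {j k : ℕ} {A : Set D} {ε : ℝ}
    (hε : 0 < ε) (hAway : ∀ a ∈ A, ∀ b ∈ Dlt2 α β j k, ε ≤ dJ1 a b)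
    {δ : ℝ} (hδε : δ ≤ ε / 2) (hδ1 : δ ≤ 1) (f : D → ℝ) (hfm : Measurable f)
    (hf1 : ∀ x, f x ≤ 1) (hsupp : ∀ x, f x ≠ 0 → dSet A x < δ) :
    ∫⁻ x, ENNReal.ofReal (f x) ∂(Cmeas2 α β j k) < ⊤ := by
  haveI := sigmaFinite_nuPow hα j
  haveI := sigmaFinite_nuPow hβ k
  by_cases hmeas : AEMeasurable (Phi j k) (PiMeas α β j k)
  case neg =>
    rw [Cmeas2_eq, Measure.map_of_not_aemeasurable hmeas]
    simp
  case pos =>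
    have hcomp : AEMeasurable (fun x => ENNReal.ofReal (f x))
        (Measure.map (Phi j k) (PiMeas α β j k)) :=
      (ENNReal.measurable_ofReal.comp hfm).aemeasurable
    rw [Cmeas2_eq, lintegral_map' hcomp hmeas]
    set c := ε / 2 with hc
    have hcpos : 0 < c := by rw [hc]; linarith
    set S : Set (((Fin j → ℝ) × (Fin j → ℝ)) × ((Fin k → ℝ) × (Fin k → ℝ))) :=
      ({x | ∀ i, c ≤ x i} ×ˢ (Set.univ : Set (Fin j → ℝ))) ×ˢ
        ({y | ∀ i, c ≤ y i} ×ˢ (Set.univ : Set (Fin k → ℝ))) with hS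
    have hSm : MeasurableSet S := by
      apply MeasurableSet.prod <;> apply MeasurableSet.prod
      · have : {x : Fin j → ℝ | ∀ i, c ≤ x i} = ⋂ i, {x | c ≤ x i} := by ext x; simp
        rw [this]
        exact MeasurableSet.iInter fun i =>
          measurableSet_le measurable_const (measurable_pi_apply i)
      · exact MeasurableSet.univ
      · have : {y : Fin k → ℝ | ∀ i, c ≤ y i} = ⋂ i, {y | c ≤ y i} := by ext y; simp
        rw [this]
        exact MeasurableSet.iInter fun i =>
          measurableSet_le measurable_const (measurable_pi_apply i)
      · exact MeasurableSet.univ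
    have key : ∀ᵐ p ∂(PiMeas α β j k),
        ENNReal.ofReal (f (Phi j k p)) ≤ S.indicator (fun _ => 1) p := by
      filter_upwards [good_ae hα hβ j k] with p hp
      by_cases hzero : f (Phi j k p) = 0
      · simp [hzero]
      · have hd : dSet A (Phi j k p) < δ := hsupp _ hzero
        obtain ⟨a, ha, hlt⟩ := dSet_lt_elim hd hδ1
        have hx : ∀ i, c ≤ p.1.1 i := by
          cases j with
          | zero => exact fun i => i.elim0
          | succ j' =>
            intro i
            have hb := del_x_bound hα hp hAway ha hlt
            have hcone := hp.2.2.2.2.2.2.2.1 i (Fin.last j') (Fin.le_last i)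
            have : c ≤ p.1.1 (Fin.last j') := by rw [hc]; linarith
            linarith
        have hy : ∀ i, c ≤ p.2.1 i := by
          cases k with
          | zero => exact fun i => i.elim0
          | succ k' =>
            intro i
            have hb := del_y_bound hβ hp hAway ha hlt
            have hcone := hp.2.2.2.2.2.2.2.2 i (Fin.last k') (Fin.le_last i)
            have : c ≤ p.2.1 (Fin.last k') := by rw [hc]; linarith
            linarith
        have hmem : p ∈ S := by
          rw [hS]
          exact ⟨⟨hx, Set.mem_univ _⟩, hy, Set.mem_univ _⟩
        calc ENNReal.ofReal (f (Phi j k p)) ≤ 1 := ENNReal.ofReal_le_one.2 (hf1 _)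
          _ = S.indicator (fun _ => 1) p := (Set.indicator_of_mem hmem (fun _ => (1:ℝ≥0∞))).symm
    calc ∫⁻ p, ENNReal.ofReal (f (Phi j k p)) ∂(PiMeas α β j k)
        ≤ ∫⁻ p, S.indicator (fun _ => 1) p ∂(PiMeas α β j k) := lintegral_mono_ae key
      _ = PiMeas α β j k S := lintegral_indicator_one hSm
      _ < ⊤ := by
          rw [hS, PiMeas]
          simp only [Measure.prod_prod, measure_univ, mul_one]
          have hbound : ∀ (γ : ℝ), 1 < γ → ∀ (l : ℕ),
              nuPow γ l {x : Fin l → ℝ | ∀ i, c ≤ x i} < ⊤ := by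
            intro γ hγ l
            have hpi : {x : Fin l → ℝ | ∀ i, c ≤ x i}
                = Set.pi Set.univ (fun _ : Fin l => Set.Ici c) := by
              ext x; simp [Set.mem_pi, Pi.le_def]
            calc nuPow γ l {x : Fin l → ℝ | ∀ i, c ≤ x i}
                ≤ (Measure.pi fun _ : Fin l => nuPareto γ) {x | ∀ i, c ≤ x i} :=
                  Measure.restrict_apply_le _ _
              _ = ∏ _i : Fin l, nuPareto γ (Set.Ici c) := by
                  haveI := sigmaFinite_nuPareto hγ
                  rw [hpi, Measure.pi_pi]
              _ < ⊤ := ENNReal.prod_lt_top fun i _ => nuPareto_Ici_lt_top hγ hcpos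
          exact ENNReal.mul_lt_top (hbound α hα j) (hbound β hβ k)

/-- Vanishing of `∫ f dC_{l,m}` when `f` is supported `δ`-close to a set `A` bounded away
from `D_{l,m}`. -/
lemma lint_zero {α β : ℝ} (hα : 1 < α) (hβ : 1 < β) {l m : ℕ} {A : Set D} {ε : ℝ}
    (hAway : ∀ a ∈ A, ∀ b ∈ Dstep2 l m, ε ≤ dJ1 a b) {δ : ℝ} (hδ : δ ≤ ε)
    (f : D → ℝ) (hfm : Measurable f)
    (hsupp : ∀ x, f x ≠ 0 → ∃ a ∈ A, dJ1 a x < δ) :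
    ∫⁻ x, ENNReal.ofReal (f x) ∂(Cmeas2 α β l m) = 0 := by
  by_cases hmeas : AEMeasurable (Phi l m) (PiMeas α β l m)
  case neg =>
    rw [Cmeas2_eq, Measure.map_of_not_aemeasurable hmeas]
    simp
  case pos =>
    have hcomp : AEMeasurable (fun x => ENNReal.ofReal (f x))
        (Measure.map (Phi l m) (PiMeas α β l m)) :=
      (ENNReal.measurable_ofReal.comp hfm).aemeasurable
    rw [Cmeas2_eq, lintegral_map' hcomp hmeas]
    have hzero : ∀ᵐ p ∂(PiMeas α β l m),
        (fun p => ENNReal.ofReal (f (Phi l m p))) p = (0 : ℝ≥0∞) := by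
      filter_upwards [good_ae hα hβ l m] with p hp
      have hf0 : f (Phi l m p) = 0 := by
        by_contra hc
        obtain ⟨a, ha, hlt⟩ := hsupp _ hc
        have := hAway a ha _ (good_mem_Dstep2 hp)
        linarith
      simp [hf0]
    rw [lintegral_congr_ae hzero, lintegral_zero]

/-- If `Yₙ` satisfies the two-sided `𝕄`-convergence for every `(j,k)`,
then the two-sided sample-path large deviation bounds hold for `Yₙ`. -/
theorem two_sided_bounds_of_M_convergence
    {Ω : Type} [MeasurableSpace Ω] (P : Measure Ω) [IsProbabilityMeasure P]
    (ν : Measure ℝ) (α β : ℝ) (hα : 1 < α) (hβ : 1 < β)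
    (hregp : RegVarying (fun s => (ν (Set.Ici s)).toReal) (-α))
    (hregm : RegVarying (fun s => (ν (Set.Iic (-s))).toReal) (-β))
    (Y : ℕ → Ω → D) (hY : ∀ n, Measurable (Y n))
    (hconv : ∀ j k : ℕ,
      MConv dJ1 (Dlt2 α β j k)
        (fun n => (norm2 ν n j k)⁻¹ • Measure.map (Y n) P) (Cmeas2 α β j k))
    (A : Set D) (hA : MeasurableSet A) :
    (∀ j k : ℕ,
      (Dstep2 j k ∩ A).Nonempty →
      (∀ l m : ℕ, (Dstep2 l m ∩ A).Nonempty →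
        (α - 1) * j + (β - 1) * k ≤ (α - 1) * l + (β - 1) * m) →
      BddAway dJ1 A (Dlt2 α β j k) →
      (Cmeas2 α β j k (interior A) ≤
          Filter.liminf (fun n => (norm2 ν n j k)⁻¹ * P {ω | Y n ω ∈ A}) Filter.atTop ∧
        Filter.limsup (fun n => (norm2 ν n j k)⁻¹ * P {ω | Y n ω ∈ A}) Filter.atTop ≤
          Cmeas2 α β j k (closure A))) ∧
    ((¬ ∃ j k : ℕ, (Dstep2 j k ∩ A).Nonempty ∧
        ∀ l m : ℕ, (Dstep2 l m ∩ A).Nonempty →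
          (α - 1) * j + (β - 1) * k ≤ (α - 1) * l + (β - 1) * m) →
      ∀ l m : ℕ, (l, m) ≠ (0, 0) →
        BddAway dJ1 A (Dlt2 α β l m ∪ Dstep2 l m) →
        Filter.Tendsto (fun n => (norm2 ν n l m)⁻¹ * P {ω | Y n ω ∈ A})
          Filter.atTop (nhds 0)) := by
  classical
  have hμnA : ∀ (j k n : ℕ),
      (norm2 ν n j k)⁻¹ * P {ω | Y n ω ∈ A}
        = ((norm2 ν n j k)⁻¹ • Measure.map (Y n) P) A := by
    intro j k n
    rw [Measure.smul_apply, Measure.map_apply (hY n) hA, smul_eq_mul]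
    rfl
  constructor
  · -- Part 1: the two-sided bounds at the minimizing pair (j,k).
    intro j k _hne _hmin hBdd
    obtain ⟨ε, hε, hAway⟩ := hBdd
    have hEq : (fun n => (norm2 ν n j k)⁻¹ * P {ω | Y n ω ∈ A})
        = fun n => ((norm2 ν n j k)⁻¹ • Measure.map (Y n) P) A := funext (hμnA j k)
    rw [hEq]
    set μn : ℕ → Measure D := fun n => (norm2 ν n j k)⁻¹ • Measure.map (Y n) P with hμn
    constructor
    · -- lower bound
      set G := interior A with hG
      set g : ℕ → D → ℝ := fun m x => min 1 ((m+1) * dSet Gᶜ x) with hg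
      have hgcont : ∀ m, Continuous (g m) := fun m =>
        continuous_const.min (continuous_const.mul (continuous_dSet _))
      have hg0 : ∀ m x, 0 ≤ g m x := fun m x =>
        le_min zero_le_one (mul_nonneg (by positivity) (dSet_nonneg _ _))
      have hg1 : ∀ m x, g m x ≤ 1 := fun m x => min_le_left _ _
      have hgsupp : ∀ m x, g m x ≠ 0 → x ∈ G := by
        intro m x hx
        by_contra hxG
        have hd : dSet Gᶜ x = 0 := dSet_eq_zero_of_mem hxG
        apply hx
        rw [hg]
        simp [hd]
      have htend : ∀ m, Tendsto (fun n => ∫⁻ x, ENNReal.ofReal (g m x) ∂(μn n)) atTop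
          (𝓝 (∫⁻ x, ENNReal.ofReal (g m x) ∂(Cmeas2 α β j k))) := by
        intro m
        apply hconv j k (g m) (hgcont m)
          ⟨1, fun x => abs_le.2 ⟨by linarith [hg0 m x], hg1 m x⟩⟩ (hg0 m)
        refine ⟨ε, hε, fun x hxy => ?_⟩
        obtain ⟨y, hy, hxy⟩ := hxy
        by_contra hgx
        have hxA : x ∈ A := interior_subset (hgsupp m x hgx)
        have h1 := hAway x hxA y hy
        rw [dJ1_symm y x] at hxy
        linarith
      have hle : ∀ m n, (∫⁻ x, ENNReal.ofReal (g m x) ∂(μn n)) ≤ μn n A := by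
        intro m n
        rw [← lintegral_indicator_one hA]
        apply lintegral_mono
        intro x
        by_cases hx : x ∈ A
        · rw [Set.indicator_of_mem hx]
          exact ENNReal.ofReal_le_one.2 (hg1 m x)
        · rw [Set.indicator_of_notMem hx]
          have hzero : g m x = 0 := by
            by_contra hgx
            exact hx (interior_subset (hgsupp m x hgx))
          simp [hzero]
      have hCle : ∀ m, (∫⁻ x, ENNReal.ofReal (g m x) ∂(Cmeas2 α β j k))
          ≤ liminf (fun n => μn n A) atTop := by
        intro m
        rw [← (htend m).liminf_eq]
        exact liminf_le_liminf (Filter.Eventually.of_forall (hle m))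
      have hmono : Monotone fun m : ℕ => fun x : D => ENNReal.ofReal (g m x) := by
        intro m m' hmm
        intro x
        apply ENNReal.ofReal_le_ofReal
        rw [hg]
        dsimp only
        apply min_le_min le_rfl
        apply mul_le_mul_of_nonneg_right _ (dSet_nonneg _ _)
        have hcast : (m : ℝ) ≤ (m' : ℝ) := Nat.cast_le.2 hmm
        linarith
      have hsup : ∀ x, (⨆ m : ℕ, ENNReal.ofReal (g m x))
          = Set.indicator G (fun _ => (1:ℝ≥0∞)) x := by
        intro x
        by_cases hx : x ∈ G
        · rw [Set.indicator_of_mem hx]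
          have hpos : 0 < dSet Gᶜ x := dSet_pos_of_mem_open isOpen_interior hx
          apply le_antisymm
          · exact iSup_le fun m => ENNReal.ofReal_le_one.2 (hg1 m x)
          · obtain ⟨m, hm⟩ := exists_nat_ge (1 / dSet Gᶜ x)
            have h1 : (1:ℝ) ≤ (m+1) * dSet Gᶜ x := by
              rw [div_le_iff₀ hpos] at hm
              nlinarith
            have hgm : g m x = 1 := min_eq_left h1
            refine le_iSup_of_le m ?_
            rw [hgm]
            simp
        · rw [Set.indicator_of_notMem hx]
          have h0 : ∀ m, g m x = 0 := by
            intro m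
            by_contra hgx
            exact hx (hgsupp m x hgx)
          simp [h0]
      calc Cmeas2 α β j k (interior A)
          = ∫⁻ x, Set.indicator G (fun _ => (1:ℝ≥0∞)) x ∂(Cmeas2 α β j k) :=
            (lintegral_indicator_one isOpen_interior.measurableSet).symm
        _ = ∫⁻ x, ⨆ m : ℕ, ENNReal.ofReal (g m x) ∂(Cmeas2 α β j k) :=
            lintegral_congr fun x => (hsup x).symm
        _ = ⨆ m, ∫⁻ x, ENNReal.ofReal (g m x) ∂(Cmeas2 α β j k) :=
            lintegral_iSup (fun m => ENNReal.measurable_ofReal.comp (hgcont m).measurable) hmono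
        _ ≤ liminf (fun n => μn n A) atTop := iSup_le hCle
    · -- upper bound
      set δ1 : ℝ := min (ε/2) (1/2) with hδ1def
      have hδ1pos : 0 < δ1 := lt_min (by linarith) (by norm_num)
      have hδ1le : δ1 ≤ ε/2 := min_le_left _ _
      have hδ1le1 : δ1 ≤ 1 := le_trans (min_le_right _ _) (by norm_num)
      set F : ℕ → D → ℝ := fun m x => max 0 (1 - dSet A x * (m+1) / δ1) with hF
      have hFcont : ∀ m, Continuous (F m) := fun m =>
        continuous_const.max (continuous_const.sub
          (((continuous_dSet A).mul continuous_const).div_const _))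
      have hF0 : ∀ m x, 0 ≤ F m x := fun m x => le_max_left _ _
      have hF1 : ∀ m x, F m x ≤ 1 := by
        intro m x
        apply max_le zero_le_one
        have h1 : 0 ≤ dSet A x * (m+1) / δ1 :=
          div_nonneg (mul_nonneg (dSet_nonneg A x) (by positivity)) hδ1pos.le
        linarith
      have hFsupp : ∀ m x, F m x ≠ 0 → dSet A x * (m+1) < δ1 := by
        intro m x hx
        by_contra hcon
        push_neg at hcon
        apply hx
        rw [hF]
        dsimp only
        apply max_eq_left
        rw [sub_nonpos, le_div_iff₀ hδ1pos, one_mul]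
        exact hcon
      have hFsupp' : ∀ m x, F m x ≠ 0 → dSet A x < δ1 := by
        intro m x hx
        have h1 := hFsupp m x hx
        have h2 : dSet A x ≤ dSet A x * (m+1) := by
          nlinarith [dSet_nonneg A x, Nat.cast_nonneg (α := ℝ) m]
        linarith
      have hind : ∀ m x, Set.indicator A (fun _ => (1:ℝ≥0∞)) x ≤ ENNReal.ofReal (F m x) := by
        intro m x
        by_cases hx : x ∈ A
        · rw [Set.indicator_of_mem hx]
          have hFx : F m x = 1 := by
            rw [hF]
            dsimp only
            rw [dSet_eq_zero_of_mem hx]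
            norm_num
          rw [hFx]
          simp
        · rw [Set.indicator_of_notMem hx]
          exact zero_le
      have htend : ∀ m, Tendsto (fun n => ∫⁻ x, ENNReal.ofReal (F m x) ∂(μn n)) atTop
          (𝓝 (∫⁻ x, ENNReal.ofReal (F m x) ∂(Cmeas2 α β j k))) := by
        intro m
        apply hconv j k (F m) (hFcont m)
          ⟨1, fun x => abs_le.2 ⟨by linarith [hF0 m x], hF1 m x⟩⟩ (hF0 m)
        refine ⟨ε/2, by linarith, fun x hxy => ?_⟩
        obtain ⟨y, hy, hxy⟩ := hxy
        by_contra hFx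
        obtain ⟨a, ha, halt⟩ := dSet_lt_elim (hFsupp' m x hFx) hδ1le1
        have h1 := hAway a ha y hy
        have h2 := dJ1_triangle a x y
        rw [dJ1_symm y x] at hxy
        linarith
      have hup : ∀ m, limsup (fun n => μn n A) atTop
          ≤ ∫⁻ x, ENNReal.ofReal (F m x) ∂(Cmeas2 α β j k) := by
        intro m
        rw [← (htend m).limsup_eq]
        apply limsup_le_limsup (Filter.Eventually.of_forall fun n => ?_)
        rw [← lintegral_indicator_one hA]
        exact lintegral_mono (hind m)
      have hfin : ∫⁻ x, ENNReal.ofReal (F 0 x) ∂(Cmeas2 α β j k) < ⊤ := by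
        apply lint_fin hα hβ hε hAway hδ1le hδ1le1 (F 0) (hFcont 0).measurable (hF1 0)
        exact fun x hx => hFsupp' 0 x hx
      have hanti : ∀ m x, ENNReal.ofReal (F m x) ≤ ENNReal.ofReal (F 0 x) := by
        intro m x
        apply ENNReal.ofReal_le_ofReal
        rw [hF]
        dsimp only
        apply max_le_max le_rfl
        apply sub_le_sub_left
        apply (div_le_div_iff_of_pos_right hδ1pos).2
        apply mul_le_mul_of_nonneg_left _ (dSet_nonneg A x)
        push_cast
        have := Nat.cast_nonneg (α := ℝ) m
        linarith
      have hlim : ∀ x, Tendsto (fun m => ENNReal.ofReal (F m x)) atTop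
          (𝓝 (Set.indicator {x | dSet A x = 0} (fun _ => (1:ℝ≥0∞)) x)) := by
        intro x
        by_cases hx : dSet A x = 0
        · have hFx : ∀ m, F m x = 1 := by
            intro m
            rw [hF]
            dsimp only
            rw [hx]
            norm_num
          rw [Set.indicator_of_mem (show x ∈ {x : D | dSet A x = 0} from hx)]
          simp only [hFx]
          simpa using tendsto_const_nhds
        · rw [Set.indicator_of_notMem (show x ∉ {x : D | dSet A x = 0} from hx)]
          have hxpos : 0 < dSet A x :=
            lt_of_le_of_ne (dSet_nonneg A x) (Ne.symm hx)
          apply Filter.Tendsto.congr' _ tendsto_const_nhds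
          obtain ⟨N, hN⟩ := exists_nat_ge (δ1 / dSet A x)
          rw [Filter.EventuallyEq, eventually_atTop]
          refine ⟨N, fun m hm => ?_⟩
          have hzero : F m x = 0 := by
            rw [hF]
            dsimp only
            apply max_eq_left
            rw [sub_nonpos, le_div_iff₀ hδ1pos, one_mul]
            have h1 : δ1 / dSet A x ≤ (m : ℝ) := le_trans hN (Nat.cast_le.2 hm)
            rw [div_le_iff₀ hxpos] at h1
            nlinarith
          simp [hzero]
      have hmeas0 : MeasurableSet {x : D | dSet A x = 0} :=
        (continuous_dSet A).measurable (measurableSet_singleton 0)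
      have hDCT : Tendsto (fun m => ∫⁻ x, ENNReal.ofReal (F m x) ∂(Cmeas2 α β j k)) atTop
          (𝓝 (∫⁻ x, Set.indicator {x | dSet A x = 0} (fun _ => (1:ℝ≥0∞)) x
            ∂(Cmeas2 α β j k))) := by
        apply tendsto_lintegral_of_dominated_convergence (fun x => ENNReal.ofReal (F 0 x))
          (fun m => ENNReal.measurable_ofReal.comp (hFcont m).measurable)
          (fun m => Filter.Eventually.of_forall (hanti m)) hfin.ne (ae_of_all _ hlim)
      have hfinal : (∫⁻ x, Set.indicator {x | dSet A x = 0} (fun _ => (1:ℝ≥0∞)) x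
          ∂(Cmeas2 α β j k)) ≤ Cmeas2 α β j k (closure A) :=
        le_trans (le_of_eq (lintegral_indicator_one (μ := Cmeas2 α β j k) hmeas0))
          (measure_mono fun x hx => mem_closure_of_dSet hx)
      exact le_trans (ge_of_tendsto hDCT (Filter.Eventually.of_forall hup)) hfinal
  · -- Part 2: vanishing when no minimizing pair exists.
    intro _hno l m _hlm hBdd
    obtain ⟨ε, hε, hAway⟩ := hBdd
    have hAway1 : ∀ a ∈ A, ∀ b ∈ Dlt2 α β l m, ε ≤ dJ1 a b :=
      fun a ha b hb => hAway a ha b (Or.inl hb)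
    have hAway2 : ∀ a ∈ A, ∀ b ∈ Dstep2 l m, ε ≤ dJ1 a b :=
      fun a ha b hb => hAway a ha b (Or.inr hb)
    have hEq : (fun n => (norm2 ν n l m)⁻¹ * P {ω | Y n ω ∈ A})
        = fun n => ((norm2 ν n l m)⁻¹ • Measure.map (Y n) P) A := funext (hμnA l m)
    rw [hEq]
    set μn : ℕ → Measure D := fun n => (norm2 ν n l m)⁻¹ • Measure.map (Y n) P with hμn
    set δ1 : ℝ := min (ε/2) (1/2) with hδ1def
    have hδ1pos : 0 < δ1 := lt_min (by linarith) (by norm_num)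
    have hδ1le : δ1 ≤ ε/2 := min_le_left _ _
    have hδ1le1 : δ1 ≤ 1 := le_trans (min_le_right _ _) (by norm_num)
    set F : D → ℝ := fun x => max 0 (1 - dSet A x / δ1) with hF
    have hFcont : Continuous F :=
      continuous_const.max (continuous_const.sub ((continuous_dSet A).div_const _))
    have hF0 : ∀ x, 0 ≤ F x := fun x => le_max_left _ _
    have hF1 : ∀ x, F x ≤ 1 := by
      intro x
      apply max_le zero_le_one
      have h1 : 0 ≤ dSet A x / δ1 := div_nonneg (dSet_nonneg A x) hδ1pos.le
      linarith
    have hFsupp : ∀ x, F x ≠ 0 → dSet A x < δ1 := by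
      intro x hx
      by_contra hcon
      push_neg at hcon
      apply hx
      rw [hF]
      dsimp only
      apply max_eq_left
      rw [sub_nonpos, le_div_iff₀ hδ1pos, one_mul]
      exact hcon
    have hind : ∀ x, Set.indicator A (fun _ => (1:ℝ≥0∞)) x ≤ ENNReal.ofReal (F x) := by
      intro x
      by_cases hx : x ∈ A
      · rw [Set.indicator_of_mem hx]
        have hFx : F x = 1 := by
          rw [hF]
          dsimp only
          rw [dSet_eq_zero_of_mem hx]
          norm_num
        rw [hFx]
        simp
      · rw [Set.indicator_of_notMem hx]
        exact zero_le
    have htend : Tendsto (fun n => ∫⁻ x, ENNReal.ofReal (F x) ∂(μn n)) atTop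
        (𝓝 (∫⁻ x, ENNReal.ofReal (F x) ∂(Cmeas2 α β l m))) := by
      apply hconv l m F hFcont
        ⟨1, fun x => abs_le.2 ⟨by linarith [hF0 x], hF1 x⟩⟩ hF0
      refine ⟨ε/2, by linarith, fun x hxy => ?_⟩
      obtain ⟨y, hy, hxy⟩ := hxy
      by_contra hFx
      obtain ⟨a, ha, halt⟩ := dSet_lt_elim (hFsupp x hFx) hδ1le1
      have h1 := hAway1 a ha y hy
      have h2 := dJ1_triangle a x y
      rw [dJ1_symm y x] at hxy
      linarith
    have hCzero : ∫⁻ x, ENNReal.ofReal (F x) ∂(Cmeas2 α β l m) = 0 := by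
      apply lint_zero hα hβ hAway2 (δ := δ1) (by linarith) F hFcont.measurable
      exact fun x hx => dSet_lt_elim (hFsupp x hx) hδ1le1
    rw [hCzero] at htend
    apply tendsto_of_tendsto_of_tendsto_of_le_of_le tendsto_const_nhds htend
      (fun n => zero_le)
    intro n
    show μn n A ≤ ∫⁻ x, ENNReal.ofReal (F x) ∂(μn n)
    rw [← lintegral_indicator_one hA]
    exact lintegral_mono hind


end
end

section
/- Let Z be a Lévy process (a càdlàg process with Z(0) = 0 and stationary independent increments). Then for every n ≥ 0 and every x > 0, P(sup_{t∈[0,n]} |Z(t)| ≥ x) ≤ 3 sup_{t∈[0,n]} P(|Z(t)| ≥ x/3). -/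
open MeasureTheory Filter Topology Set ProbabilityTheory
open scoped ENNReal NNReal Classical

noncomputable section

lemma etemadi_aux {Ω : Type} [MeasurableSpace Ω] (P : Measure Ω) [IsProbabilityMeasure P]
    {k : ℕ} {X : Fin k → Ω → ℝ} (hX : ∀ i, Measurable (X i))
    (hind : iIndepFun X P) {c : ℝ} {A : ℝ≥0∞}
    (hA : ∀ i : ℕ, i ≤ k →
      P {ω | c ≤ |∑ l ∈ Finset.univ.filter (fun l : Fin k => i ≤ (l : ℕ)), X l ω|} ≤ A) :
    P {ω | ∃ j : ℕ, j ≤ k ∧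
        2 * c < |∑ l ∈ Finset.univ.filter (fun l : Fin k => (l : ℕ) < j), X l ω|} ≤ A + A := by
  -- partial sums and tails
  set S : ℕ → Ω → ℝ :=
    fun j ω => ∑ l ∈ Finset.univ.filter (fun l : Fin k => (l : ℕ) < j), X l ω with hS
  set T : ℕ → Ω → ℝ :=
    fun i ω => ∑ l ∈ Finset.univ.filter (fun l : Fin k => i ≤ (l : ℕ)), X l ω with hT
  have hmeasS : ∀ j, Measurable (S j) := fun j => Finset.measurable_sum _ fun l _ => hX l
  have hmeasT : ∀ i, Measurable (T i) := fun i => Finset.measurable_sum _ fun l _ => hX l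
  have hsplit : ∀ i ω, T 0 ω = S i ω + T i ω := by
    intro i ω
    have := Finset.sum_filter_add_sum_filter_not (Finset.univ : Finset (Fin k))
      (fun l : Fin k => (l : ℕ) < i) (fun l => X l ω)
    simp only [not_lt] at this
    rw [hS, hT]
    simp only [Nat.zero_le, Finset.filter_true_of_mem, Finset.mem_univ, forall_true_iff]
    rw [← this]
  -- the first-entry events
  set E : ℕ → Set Ω :=
    fun i => {ω | 2 * c < |S i ω| ∧ ∀ j < i, |S j ω| ≤ 2 * c} with hE
  have hEmeas : ∀ i, MeasurableSet (E i) := by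
    intro i
    have h1 : MeasurableSet {ω | 2 * c < |S i ω|} :=
      measurableSet_lt measurable_const (hmeasS i).abs
    have h2 : ∀ j, MeasurableSet {ω | |S j ω| ≤ 2 * c} := fun j =>
      measurableSet_le (hmeasS j).abs measurable_const
    have : E i = {ω | 2 * c < |S i ω|} ∩ ⋂ j ∈ Finset.range i, {ω | |S j ω| ≤ 2 * c} := by
      ext ω
      simp only [hE, Set.mem_setOf_eq, Set.mem_inter_iff, Set.mem_iInter, Finset.mem_range]
    rw [this]
    exact h1.inter (MeasurableSet.biInter (Finset.range i).countable_toSet fun j _ => h2 j)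
  have hEdisj : ∀ i i', i < i' → Disjoint (E i) (E i') := by
    intro i i' hii'
    rw [Set.disjoint_left]
    rintro ω ⟨h1, _⟩ ⟨_, h2⟩
    exact absurd (h2 i hii') (not_le.mpr h1)
  -- the target event is covered by the E i
  have hcover : {ω | ∃ j : ℕ, j ≤ k ∧ 2 * c < |S j ω|} ⊆ ⋃ i ∈ Finset.range (k + 1), E i := by
    intro ω hω
    obtain ⟨j, hjk, hj⟩ := hω
    have hex : ∃ j, 2 * c < |S j ω| := ⟨j, hj⟩
    have hmem : Nat.find hex ∈ Finset.range (k + 1) := by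
      simp only [Finset.mem_range, Nat.lt_succ_iff]
      exact le_trans (Nat.find_le hj) hjk
    exact Set.mem_biUnion hmem
      ⟨Nat.find_spec hex, fun j' hj' => not_lt.mp (Nat.find_min hex hj')⟩
  -- independence: E i is independent of the tail event
  have hindep2 : ∀ i : ℕ,
      P (E i ∩ {ω | c ≤ |T i ω|}) = P (E i) * P {ω | c ≤ |T i ω|} := by
    intro i
    have hle : ∀ l : Fin k, MeasurableSpace.comap (X l) inferInstance ≤ ‹MeasurableSpace Ω› :=
      fun l => (hX l).comap_le
    have hiI : iIndep (fun l : Fin k => MeasurableSpace.comap (X l) inferInstance) P :=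
      (iIndepFun_iff_iIndep _ _ _).mp hind
    set mA := ⨆ l ∈ {l : Fin k | (l : ℕ) < i}, MeasurableSpace.comap (X l) inferInstance with hmA
    -- X l is measurable w.r.t. mA for l < i
    have hXA : ∀ l : Fin k, (l : ℕ) < i → Measurable[mA] (X l) := by
      intro l hl
      rw [measurable_iff_comap_le]
      exact le_biSup (fun l : Fin k => MeasurableSpace.comap (X l) inferInstance) hl
    have hSA : ∀ j, j ≤ i → Measurable[mA] (S j) := by
      intro j hj
      apply Finset.measurable_sum
      intro l hl
      simp only [Finset.mem_filter] at hl
      exact hXA l (lt_of_lt_of_le hl.2 hj)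
    have hEA : MeasurableSet[mA] (E i) := by
      have h1 : MeasurableSet[mA] {ω | 2 * c < |S i ω|} :=
        measurableSet_lt measurable_const (hSA i le_rfl).abs
      have h2 : ∀ j, j < i → MeasurableSet[mA] {ω | |S j ω| ≤ 2 * c} := fun j hj =>
        measurableSet_le (hSA j hj.le).abs measurable_const
      have : E i = {ω | 2 * c < |S i ω|} ∩ ⋂ j ∈ Finset.range i, {ω | |S j ω| ≤ 2 * c} := by
        ext ω
        simp only [hE, Set.mem_setOf_eq, Set.mem_inter_iff, Set.mem_iInter, Finset.mem_range]
      rw [this]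
      exact MeasurableSet.inter h1
        (MeasurableSet.biInter (Finset.range i).countable_toSet fun j hj =>
          h2 j (Finset.mem_range.mp hj))
    set mB := ⨆ l ∈ {l : Fin k | (l : ℕ) < i}ᶜ, MeasurableSpace.comap (X l) inferInstance with hmB
    have hXB : ∀ l : Fin k, i ≤ (l : ℕ) → Measurable[mB] (X l) := by
      intro l hl
      rw [measurable_iff_comap_le]
      exact le_biSup (fun l : Fin k => MeasurableSpace.comap (X l) inferInstance)
        (by simp [not_lt.mpr hl])
    have hTB : Measurable[mB] (T i) := by
      apply Finset.measurable_sum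
      intro l hl
      simp only [Finset.mem_filter] at hl
      exact hXB l hl.2
    have hTBset : MeasurableSet[mB] {ω | c ≤ |T i ω|} :=
      measurableSet_le measurable_const hTB.abs
    have hInd := indep_biSup_compl hle hiI {l : Fin k | (l : ℕ) < i}
    exact (Indep_iff mA mB P).mp hInd _ _ hEA hTBset
  -- per-event estimate
  have hA0 : P {ω | c ≤ |T 0 ω|} ≤ A := hA 0 (Nat.zero_le k)
  have hEbound : ∀ i : ℕ, i ≤ k →
      P (E i) ≤ P (E i ∩ {ω | c ≤ |T 0 ω|}) + P (E i) * A := by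
    intro i hik
    have hsub : E i ⊆ (E i ∩ {ω | c ≤ |T 0 ω|}) ∪ (E i ∩ {ω | c ≤ |T i ω|}) := by
      intro ω hω
      by_cases h : c ≤ |T 0 ω|
      · exact Or.inl ⟨hω, h⟩
      · push_neg at h
        refine Or.inr ⟨hω, ?_⟩
        have habs : |S i ω| - |T 0 ω| ≤ |T i ω| := by
          have h2 : S i ω - T 0 ω = -(T i ω) := by have := hsplit i ω; linarith
          calc |S i ω| - |T 0 ω| ≤ |S i ω - T 0 ω| := abs_sub_abs_le_abs_sub _ _
            _ = |T i ω| := by rw [h2, abs_neg]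
        have h1 : 2 * c < |S i ω| := hω.1
        simp only [Set.mem_setOf_eq]
        linarith
    calc P (E i) ≤ P ((E i ∩ {ω | c ≤ |T 0 ω|}) ∪ (E i ∩ {ω | c ≤ |T i ω|})) :=
          measure_mono hsub
      _ ≤ P (E i ∩ {ω | c ≤ |T 0 ω|}) + P (E i ∩ {ω | c ≤ |T i ω|}) :=
          measure_union_le _ _
      _ = P (E i ∩ {ω | c ≤ |T 0 ω|}) + P (E i) * P {ω | c ≤ |T i ω|} := by
          rw [hindep2 i]
      _ ≤ P (E i ∩ {ω | c ≤ |T 0 ω|}) + P (E i) * A := by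
          gcongr
          exact hA i hik
  -- summing up
  have hdisj' : (↑(Finset.range (k + 1)) : Set ℕ).PairwiseDisjoint E := by
    intro i _ j _ hij
    rcases lt_or_gt_of_ne hij with h | h
    · exact hEdisj i j h
    · exact (hEdisj j i h).symm
  have hsum1 : ∑ i ∈ Finset.range (k + 1), P (E i ∩ {ω | c ≤ |T 0 ω|}) ≤ A := by
    have hd2 : (↑(Finset.range (k + 1)) : Set ℕ).PairwiseDisjoint
        (fun i => E i ∩ {ω | c ≤ |T 0 ω|}) := by
      intro i hi j hj hij
      exact Disjoint.mono Set.inter_subset_left Set.inter_subset_left (hdisj' hi hj hij)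
    rw [← measure_biUnion_finset hd2 (fun i _ =>
      (hEmeas i).inter (measurableSet_le measurable_const (hmeasT 0).abs))]
    refine le_trans (measure_mono ?_) hA0
    exact Set.iUnion₂_subset fun i _ => Set.inter_subset_right
  have hsum2 : ∑ i ∈ Finset.range (k + 1), P (E i) ≤ 1 := by
    rw [← measure_biUnion_finset hdisj' (fun i _ => hEmeas i)]
    exact prob_le_one
  calc P {ω | ∃ j : ℕ, j ≤ k ∧ 2 * c < |S j ω|}
      ≤ P (⋃ i ∈ Finset.range (k + 1), E i) := measure_mono hcover
    _ ≤ ∑ i ∈ Finset.range (k + 1), P (E i) := measure_biUnion_finset_le _ _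
    _ ≤ ∑ i ∈ Finset.range (k + 1),
          (P (E i ∩ {ω | c ≤ |T 0 ω|}) + P (E i) * A) :=
        Finset.sum_le_sum fun i hi => hEbound i (Nat.lt_succ_iff.mp (Finset.mem_range.mp hi))
    _ = (∑ i ∈ Finset.range (k + 1), P (E i ∩ {ω | c ≤ |T 0 ω|})) +
          (∑ i ∈ Finset.range (k + 1), P (E i)) * A := by
        rw [Finset.sum_add_distrib, Finset.sum_mul]
    _ ≤ A + 1 * A := by gcongr
    _ = A + A := by rw [one_mul]

lemma telescope_aux {k : ℕ} (f : Fin (k + 1) → ℝ) :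
    ∀ j : ℕ, (hj : j ≤ k) →
      ∑ l ∈ Finset.univ.filter (fun l : Fin k => (l : ℕ) < j),
          (f l.succ - f l.castSucc) = f ⟨j, Nat.lt_succ_of_le hj⟩ - f 0 := by
  intro j
  induction j with
  | zero =>
    intro hj
    have h1 : Finset.univ.filter (fun l : Fin k => (l : ℕ) < 0) = ∅ := by
      ext l; simp
    rw [h1, Finset.sum_empty]
    have h2 : (⟨0, Nat.lt_succ_of_le hj⟩ : Fin (k + 1)) = 0 := rfl
    rw [h2, sub_self]
  | succ j ih =>
    intro hj
    have hjk : j < k := hj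
    have hins : Finset.univ.filter (fun l : Fin k => (l : ℕ) < j + 1)
        = insert (⟨j, hjk⟩ : Fin k) (Finset.univ.filter (fun l : Fin k => (l : ℕ) < j)) := by
      ext l
      simp only [Finset.mem_filter, Finset.mem_univ, true_and, Finset.mem_insert, Fin.ext_iff,
        Nat.lt_succ_iff_lt_or_eq]
      tauto
    have hnotmem : (⟨j, hjk⟩ : Fin k) ∉ Finset.univ.filter (fun l : Fin k => (l : ℕ) < j) := by
      simp
    rw [hins, Finset.sum_insert hnotmem, ih (le_of_lt hjk)]
    have hsucc : (⟨j, hjk⟩ : Fin k).succ = ⟨j + 1, Nat.lt_succ_of_le hj⟩ := rfl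
    have hcast : (⟨j, hjk⟩ : Fin k).castSucc = ⟨j, Nat.lt_succ_of_le (le_of_lt hjk)⟩ := rfl
    rw [hsucc, hcast]
    ring

/-- Etemadi's inequality for Lévy processes: if `Z` is a Lévy process
(càdlàg, `Z(0)=0`, stationary independent increments), then for every `n ≥ 0` and `x > 0`,
`P(sup_{t ∈ [0,n]} |Z(t)| ≥ x) ≤ 3 sup_{t ∈ [0,n]} P(|Z(t)| ≥ x/3)`. -/
theorem etemadi_levy
    {Ω : Type} [MeasurableSpace Ω] (P : Measure Ω) [IsProbabilityMeasure P]
    (Z : ℝ → Ω → ℝ) (hmeas : ∀ t, Measurable (Z t)) (hzero : ∀ᵐ ω ∂P, Z 0 ω = 0)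
    (hpath : ∀ ω,
      (∀ t : ℝ, 0 ≤ t →
        Filter.Tendsto (fun s => Z s ω) (nhdsWithin t (Set.Ici t)) (nhds (Z t ω))) ∧
      (∀ t : ℝ, 0 < t →
        ∃ L : ℝ, Filter.Tendsto (fun s => Z s ω) (nhdsWithin t (Set.Iio t)) (nhds L)))
    (hstat : ∀ s t : ℝ, 0 ≤ s → 0 ≤ t →
      Measure.map (fun ω => Z (s + t) ω - Z s ω) P = Measure.map (fun ω => Z t ω) P)
    (hindep : ∀ (k : ℕ) (ts : Fin (k + 1) → ℝ), Monotone ts → (∀ i, 0 ≤ ts i) →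
      iIndepFun
        (fun i : Fin k => fun ω => Z (ts i.succ) ω - Z (ts i.castSucc) ω) P) :
    ∀ n : ℝ, 0 ≤ n → ∀ x : ℝ, 0 < x →
      P {ω | x ≤ ⨆ t : Set.Icc (0 : ℝ) n, |Z (t : ℝ) ω|} ≤
        3 * ⨆ t : Set.Icc (0 : ℝ) n, P {ω | x / 3 ≤ |Z (t : ℝ) ω|} := by
  intro n hn x hx
  haveI : Nonempty (Set.Icc (0 : ℝ) n) := ⟨⟨0, le_rfl, hn⟩⟩
  set Z' : ℝ → Ω → ℝ := fun t ω => Z t ω - Z 0 ω with hZ'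
  have hZ'meas : ∀ t, Measurable (Z' t) := fun t => (hmeas t).sub (hmeas 0)
  set A := ⨆ t : Set.Icc (0 : ℝ) n, P {ω | x / 3 ≤ |Z (t : ℝ) ω|} with hAdef
  have hbound : ∀ u : ℝ, u ∈ Set.Icc (0 : ℝ) n → P {ω | x / 3 ≤ |Z u ω|} ≤ A := by
    intro u hu
    exact le_iSup (fun t : Set.Icc (0 : ℝ) n => P {ω | x / 3 ≤ |Z (t : ℝ) ω|}) ⟨u, hu⟩
  have hN : P {ω | ¬ Z 0 ω = 0} = 0 := ae_iff.mp hzero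
  -- replace `Z` by `Z'` in the left-hand side event
  have hsub0 : {ω | x ≤ ⨆ t : Set.Icc (0 : ℝ) n, |Z (t : ℝ) ω|}
      ⊆ {ω | x ≤ ⨆ t : Set.Icc (0 : ℝ) n, |Z' (t : ℝ) ω|} ∪ {ω | ¬ Z 0 ω = 0} := by
    intro ω hω
    by_cases h0 : Z 0 ω = 0
    · left
      simpa only [hZ', Set.mem_setOf_eq, h0, sub_zero] using hω
    · right; exact h0
  -- enumeration of relevant times: `n` together with all rationals in `[0, n]`
  set e : ℕ → ℚ := fun m => (Denumerable.eqv ℚ).symm m with he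
  set d : ℕ → ℝ := fun m => if m = 0 then n else max 0 (min n ((e (m - 1) : ℚ) : ℝ)) with hddef
  have hd : ∀ m, d m ∈ Set.Icc (0 : ℝ) n := by
    intro m
    by_cases h : m = 0
    · simp [hddef, h, hn]
    · constructor
      · simp [hddef, h]
      · simp only [hddef, h, if_false]
        exact max_le hn (min_le_left _ _)
  have hd0 : d 0 = n := by simp [hddef]
  have hdsurj : ∀ q : ℚ, (q : ℝ) ∈ Set.Icc (0 : ℝ) n → ∃ m, d m = (q : ℝ) := by
    intro q hq
    refine ⟨(Denumerable.eqv ℚ) q + 1, ?_⟩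
    simp only [hddef, he, Nat.add_sub_cancel, Nat.succ_ne_zero, if_false,
      Equiv.symm_apply_apply]
    rw [min_eq_right hq.2, max_eq_right hq.1]
  -- the approximating events
  set B : ℕ → Set Ω := fun m => {ω | ∃ i ≤ m, 2 * (x / 3) < |Z' (d i) ω|} with hBdef
  have hBmono : Monotone B := by
    intro a b hab ω hω
    obtain ⟨i, hia, hi⟩ := hω
    exact ⟨i, hia.trans hab, hi⟩
  -- Claim A : the sup event is covered by the union of the `B m`
  have hclaimA : {ω | x ≤ ⨆ t : Set.Icc (0 : ℝ) n, |Z' (t : ℝ) ω|} ⊆ ⋃ m, B m := by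
    intro ω hω
    have h23 : 2 * (x / 3) < x := by linarith
    obtain ⟨t, ht⟩ := exists_lt_of_lt_ciSup (lt_of_lt_of_le h23 hω)
    rcases eq_or_lt_of_le t.2.2 with htn | htn
    · exact Set.mem_iUnion.mpr ⟨0, 0, le_rfl, by rw [hd0, ← htn]; exact ht⟩
    · have hcont : Filter.Tendsto (fun s => Z' s ω)
          (nhdsWithin (t : ℝ) (Set.Ici (t : ℝ))) (nhds (Z' (t : ℝ) ω)) :=
        ((hpath ω).1 t t.2.1).sub_const _
      have hev1 : ∀ᶠ s in nhdsWithin (t : ℝ) (Set.Ici (t : ℝ)), 2 * (x / 3) < |Z' s ω| :=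
        (hcont.abs).eventually_const_lt ht
      rw [Filter.eventually_iff, Metric.mem_nhdsWithin_iff] at hev1
      obtain ⟨ε, hε, hball⟩ := hev1
      obtain ⟨q, hq1, hq2⟩ := exists_rat_btwn (lt_min (lt_add_of_pos_right (t : ℝ) hε) htn)
      have hqball : (q : ℝ) ∈ Metric.ball (t : ℝ) ε ∩ Set.Ici (t : ℝ) := by
        constructor
        · rw [Metric.mem_ball, Real.dist_eq, abs_of_nonneg (by linarith [hq1])]
          have := hq2.trans_le (min_le_left _ _)
          linarith
        · exact le_of_lt hq1
      have hqval : 2 * (x / 3) < |Z' (q : ℝ) ω| := hball hqball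
      have hqIcc : ((q : ℝ)) ∈ Set.Icc (0 : ℝ) n :=
        ⟨le_of_lt (lt_of_le_of_lt t.2.1 hq1), le_of_lt (hq2.trans_le (min_le_right _ _))⟩
      obtain ⟨m, hm⟩ := hdsurj q hqIcc
      exact Set.mem_iUnion.mpr ⟨m, m, le_rfl, by rw [hm]; exact hqval⟩
  have hlim : P (⋃ m, B m) = ⨆ m, P (B m) := hBmono.measure_iUnion
  -- Step B : bound for each finite approximation
  have hBm : ∀ m, P (B m) ≤ A + A := by
    intro m
    set F : Finset ℝ := insert 0 ((Finset.range (m + 1)).image d) with hFdef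
    have h0F : (0 : ℝ) ∈ F := Finset.mem_insert_self _ _
    have hFIcc : ∀ y ∈ F, y ∈ Set.Icc (0 : ℝ) n := by
      intro y hy
      rcases Finset.mem_insert.mp hy with h | h
      · rw [h]; exact ⟨le_rfl, hn⟩
      · obtain ⟨i, _, rfl⟩ := Finset.mem_image.mp h
        exact hd i
    set k := F.card - 1 with hkdef
    have hcard : F.card = k + 1 := (Nat.succ_pred_eq_of_pos (Finset.card_pos.mpr ⟨0, h0F⟩)).symm
    set ts : Fin (k + 1) → ℝ := fun i => ((F.orderIsoOfFin hcard i : ℝ)) with htsdef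
    have htsmem : ∀ i, ts i ∈ F := fun i => (F.orderIsoOfFin hcard i).2
    have htsmono : Monotone ts := fun i j hij =>
      Subtype.coe_le_coe.mpr ((F.orderIsoOfFin hcard).monotone hij)
    have htsnn : ∀ i, 0 ≤ ts i := fun i => (hFIcc _ (htsmem i)).1
    have htsn : ∀ i, ts i ≤ n := fun i => (hFIcc _ (htsmem i)).2
    have hts0 : ts 0 = 0 := by
      have hj0 : ts ((F.orderIsoOfFin hcard).symm ⟨0, h0F⟩) = 0 := by
        show ((F.orderIsoOfFin hcard) ((F.orderIsoOfFin hcard).symm ⟨0, h0F⟩) : ℝ) = 0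
        rw [OrderIso.apply_symm_apply]
      have h1 : ts 0 ≤ ts ((F.orderIsoOfFin hcard).symm ⟨0, h0F⟩) :=
        htsmono (Fin.zero_le _)
      exact le_antisymm (hj0 ▸ h1) (htsnn 0)
    set X : Fin k → Ω → ℝ := fun i => fun ω => Z (ts i.succ) ω - Z (ts i.castSucc) ω with hXdef
    have hXmeas : ∀ i, Measurable (X i) := fun i => (hmeas _).sub (hmeas _)
    have hXind : iIndepFun X P := hindep k ts htsmono htsnn
    have hSum : ∀ (j : ℕ) (hj : j ≤ k) (ω : Ω),
        ∑ l ∈ Finset.univ.filter (fun l : Fin k => (l : ℕ) < j), X l ω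
          = Z' (ts ⟨j, Nat.lt_succ_of_le hj⟩) ω := by
      intro j hj ω
      have htel := telescope_aux (fun i : Fin (k + 1) => Z (ts i) ω) j hj
      calc ∑ l ∈ Finset.univ.filter (fun l : Fin k => (l : ℕ) < j), X l ω
          = Z (ts ⟨j, Nat.lt_succ_of_le hj⟩) ω - Z (ts 0) ω := htel
        _ = Z' (ts ⟨j, Nat.lt_succ_of_le hj⟩) ω := by rw [hts0]
    have hTail : ∀ i : ℕ, i ≤ k →
        P {ω | x / 3 ≤ |∑ l ∈ Finset.univ.filter (fun l : Fin k => i ≤ (l : ℕ)), X l ω|} ≤ A := by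
      intro i hik
      set a := ts ⟨i, Nat.lt_succ_of_le hik⟩ with ha
      set b := ts ⟨k, Nat.lt_succ_self k⟩ with hb
      have htail_eq : ∀ ω, ∑ l ∈ Finset.univ.filter (fun l : Fin k => i ≤ (l : ℕ)), X l ω
          = Z b ω - Z a ω := by
        intro ω
        have hsplit := Finset.sum_filter_add_sum_filter_not (Finset.univ : Finset (Fin k))
          (fun l : Fin k => (l : ℕ) < i) (fun l => X l ω)
        simp only [not_lt] at hsplit
        have htot : ∑ l, X l ω = Z b ω - Z 0 ω := by
          have h1 := hSum k le_rfl ω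
          have huniv : Finset.univ.filter (fun l : Fin k => (l : ℕ) < k) = Finset.univ := by
            ext l; simp [l.isLt]
          rw [huniv] at h1
          exact h1
        have hhead : ∑ l ∈ Finset.univ.filter (fun l : Fin k => (l : ℕ) < i), X l ω
            = Z a ω - Z 0 ω := hSum i hik ω
        rw [hhead, htot] at hsplit
        linarith
      have hab : a ≤ b := htsmono (by simp [Fin.mk_le_mk, hik])
      have hu : b - a ∈ Set.Icc (0 : ℝ) n := by
        constructor
        · exact sub_nonneg.mpr hab
        · have h1 := htsnn ⟨i, Nat.lt_succ_of_le hik⟩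
          have h2 := htsn ⟨k, Nat.lt_succ_self k⟩
          rw [← ha] at h1
          rw [← hb] at h2
          linarith
      have hmap := hstat a (b - a) (htsnn _) hu.1
      have hfun : (fun ω => Z (a + (b - a)) ω - Z a ω) = fun ω => Z b ω - Z a ω := by
        have hba : a + (b - a) = b := by ring
        rw [hba]
      rw [hfun] at hmap
      have hmset : MeasurableSet {y : ℝ | x / 3 ≤ |y|} :=
        measurableSet_le measurable_const measurable_abs
      have heq : {ω | x / 3 ≤ |∑ l ∈ Finset.univ.filter (fun l : Fin k => i ≤ (l : ℕ)), X l ω|}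
          = (fun ω => Z b ω - Z a ω) ⁻¹' {y | x / 3 ≤ |y|} := by
        ext ω
        simp only [Set.mem_setOf_eq, Set.mem_preimage]
        rw [htail_eq ω]
      rw [heq, ← Measure.map_apply (f := fun ω => Z b ω - Z a ω) ((hmeas b).sub (hmeas a)) hmset, hmap,
        Measure.map_apply (hmeas (b - a)) hmset]
      exact hbound (b - a) hu
    have hmain := etemadi_aux P hXmeas hXind hTail
    refine le_trans (measure_mono ?_) hmain
    rintro ω ⟨i, him, hival⟩
    have hdiF : d i ∈ F := Finset.mem_insert_of_mem
      (Finset.mem_image_of_mem d (Finset.mem_range.mpr (Nat.lt_succ_of_le him)))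
    have hj : ts ((F.orderIsoOfFin hcard).symm ⟨d i, hdiF⟩) = d i := by
      show ((F.orderIsoOfFin hcard) ((F.orderIsoOfFin hcard).symm ⟨d i, hdiF⟩) : ℝ) = d i
      rw [OrderIso.apply_symm_apply]
    refine ⟨(((F.orderIsoOfFin hcard).symm ⟨d i, hdiF⟩ : Fin (k + 1)) : ℕ),
      Nat.lt_succ_iff.mp ((F.orderIsoOfFin hcard).symm ⟨d i, hdiF⟩).isLt, ?_⟩
    rw [hSum _ (Nat.lt_succ_iff.mp ((F.orderIsoOfFin hcard).symm ⟨d i, hdiF⟩).isLt) ω]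
    have hfin : (⟨(((F.orderIsoOfFin hcard).symm ⟨d i, hdiF⟩ : Fin (k + 1)) : ℕ),
        Nat.lt_succ_of_le (Nat.lt_succ_iff.mp
          ((F.orderIsoOfFin hcard).symm ⟨d i, hdiF⟩).isLt)⟩ : Fin (k + 1))
        = (F.orderIsoOfFin hcard).symm ⟨d i, hdiF⟩ := by
      apply Fin.ext
      rfl
    rw [hfin, hj]
    exact hival
  calc P {ω | x ≤ ⨆ t : Set.Icc (0 : ℝ) n, |Z (t : ℝ) ω|}
      ≤ P ({ω | x ≤ ⨆ t : Set.Icc (0 : ℝ) n, |Z' (t : ℝ) ω|} ∪ {ω | ¬ Z 0 ω = 0}) :=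
        measure_mono hsub0
    _ ≤ P {ω | x ≤ ⨆ t : Set.Icc (0 : ℝ) n, |Z' (t : ℝ) ω|} + P {ω | ¬ Z 0 ω = 0} :=
        measure_union_le _ _
    _ = P {ω | x ≤ ⨆ t : Set.Icc (0 : ℝ) n, |Z' (t : ℝ) ω|} := by rw [hN, add_zero]
    _ ≤ P (⋃ m, B m) := measure_mono hclaimA
    _ = ⨆ m, P (B m) := hlim
    _ ≤ A + A := iSup_le hBm
    _ ≤ 3 * A := by
        have : (3 : ℝ≥0∞) * A = A + A + A := by ring
        rw [this]
        exact le_self_add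

end
end
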